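/- arXiv:2604.11151 — 6 statements merged into one kernel-verified Lean document; each statement's English description precedes it below -/
import Mathlib

section
/- Let Δ₁, …, Δ_T be vectors in ℝᵈ. Define M̂₁ = γ > 0 and M̂_{t+1} = max(M̂_t, ‖Δ_t‖), and let Δ̂_t = Δ_t · min(1, M̂_t/‖Δ_t‖) (with Δ̂_t = Δ_t if Δ_t = 0). Then ∑_{t=1}^T ‖Δ_t − Δ̂_t‖² ≤ (M̂_{T+1} − M̂₁)², and in particular ∑_{t=1}^T ‖Δ_t − Δ̂_t‖² ≤ 4G² whenever ‖Δ_t‖ ≤ 2G for all t. -/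
open Finset Classical

/-- Telescoping bound for the virtual-clipping error: with `M̂₁ = γ`,
`M̂_{t+1} = max(M̂_t, ‖Δ_t‖)` and `Δ̂_t = min(1, M̂_t/‖Δ_t‖) • Δ_t`,
`∑_{t=1}^T ‖Δ_t − Δ̂_t‖² ≤ (M̂_{T+1} − M̂₁)²`, and this is at most `4G²`
whenever `‖Δ_t‖ ≤ 2G` for all `t`. -/
theorem stmt_4 {d : ℕ} (T : ℕ) (Δ : ℕ → EuclideanSpace ℝ (Fin d))
    (γ G : ℝ) (hγ : 0 < γ) (hG : 0 ≤ G)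
    (M : ℕ → ℝ) (hM1 : M 1 = γ)
    (hMrec : ∀ t, M (t + 1) = max (M t) ‖Δ t‖)
    (Δhat : ℕ → EuclideanSpace ℝ (Fin d))
    (hΔhat : ∀ t, Δhat t = if Δ t = 0 then Δ t else (min 1 (M t / ‖Δ t‖)) • Δ t) :
    (∑ t ∈ Finset.Icc 1 T, ‖Δ t - Δhat t‖ ^ 2 ≤ (M (T + 1) - M 1) ^ 2) ∧
      ((∀ t ∈ Finset.Icc 1 T, ‖Δ t‖ ≤ 2 * G) →
        ∑ t ∈ Finset.Icc 1 T, ‖Δ t - Δhat t‖ ^ 2 ≤ 4 * G ^ 2) := by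
  -- M is ≥ γ for t ≥ 1
  have hMpos : ∀ t, 0 < M (t + 1) := by
    intro t
    induction t with
    | zero => simpa [hM1] using hγ
    | succ n ih => rw [hMrec]; exact lt_max_of_lt_left ih
  -- key: norm of clipping error equals M(t+1) - M t, for t ≥ 1
  have hkey : ∀ t, 0 < M t → ‖Δ t - Δhat t‖ = M (t + 1) - M t := by
    intro t hMt
    by_cases h0 : Δ t = 0
    · simp [hΔhat, h0, hMrec, norm_zero, max_eq_left hMt.le]
    · have hn : (0:ℝ) < ‖Δ t‖ := norm_pos_iff.mpr h0
      rw [hΔhat t, if_neg h0]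
      have : Δ t - (min 1 (M t / ‖Δ t‖)) • Δ t = (1 - min 1 (M t / ‖Δ t‖)) • Δ t := by
        rw [sub_smul, one_smul]
      rw [this, norm_smul]
      have hmin : min 1 (M t / ‖Δ t‖) ≤ 1 := min_le_left _ _
      rw [Real.norm_eq_abs, abs_of_nonneg (by linarith)]
      rw [hMrec]
      rw [sub_mul, one_mul, min_mul_of_nonneg _ _ hn.le, one_mul,
        div_mul_cancel₀ _ hn.ne']
      rcases le_total (M t) ‖Δ t‖ with h | h
      · rw [min_eq_right h, max_eq_right h]
      · rw [min_eq_left h, max_eq_left h]; ring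
  have hnonneg : ∀ t, M t ≤ M (t + 1) := fun t => by rw [hMrec]; exact le_max_left _ _
  have hsum : ∑ t ∈ Finset.Icc 1 T, ‖Δ t - Δhat t‖ = M (T + 1) - M 1 := by
    induction T with
    | zero => simp
    | succ n ih =>
      rw [Finset.sum_Icc_succ_top (by norm_num), ih,
        hkey (n + 1) (hMpos n)]
      ring
  have h1 : ∑ t ∈ Finset.Icc 1 T, ‖Δ t - Δhat t‖ ^ 2 ≤ (M (T + 1) - M 1) ^ 2 := by
    rw [← hsum]
    exact Finset.sum_sq_le_sq_sum_of_nonneg (fun i _ => norm_nonneg _)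
  refine ⟨h1, fun hb => h1.trans ?_⟩
  have hMub : M (T + 1) - M 1 ≤ 2 * G := by
    have : ∀ t ≤ T, M (t + 1) ≤ max (M 1) (2 * G) := by
      intro t ht
      induction t with
      | zero => exact le_max_left _ _
      | succ n ih =>
        rw [hMrec]
        refine max_le (ih (by omega)) (le_max_of_le_right ?_)
        exact hb (n + 1) (Finset.mem_Icc.mpr ⟨by omega, by omega⟩)
    have h := this T le_rfl
    have hp : 0 < M 1 := hM1 ▸ hγ
    rcases le_total (M 1) (2 * G) with hc | hc
    · rw [max_eq_right hc] at h; linarith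
    · rw [max_eq_left hc] at h; linarith
  have h0 : 0 ≤ M (T + 1) - M 1 := by
    have : ∀ t, M 1 ≤ M (t + 1) := by
      intro t; induction t with
      | zero => rfl
      | succ n ih => exact ih.trans (hnonneg _)
    linarith [this T]
  nlinarith
end

section
/- Let f₁, …, f_T : ℝᵈ → ℝ be differentiable, convex, L-smooth functions, and let w₁, …, w_T and u₁, …, u_T be points in ℝᵈ, with the convention f₀ ≡ 0. Then ∑_{t=1}^T ‖∇f_t(w_t) − ∇f_{t−1}(w_{t−1})‖² ≤ ‖∇f₁(w₁)‖² + 16L·∑_{t=1}^T D_{f_t}(u_t, w_t) + 4L²·∑_{t=2}^T ‖u_t − u_{t−1}‖² + 4·∑_{t=2}^T ‖∇f_t(u_{t−1}) − ∇f_{t−1}(u_{t−1})‖². -/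
open Finset RealInnerProductSpace

section Stmt8Aux

variable {F : Type*} [NormedAddCommGroup F] [InnerProductSpace ℝ F] [CompleteSpace F]

-- line derivative
theorem st8_lineDeriv {h : F → ℝ} {G : F → F} (hG : ∀ z, HasGradientAt h (G z) z)
    (x v : F) (t : ℝ) :
    HasDerivAt (fun s : ℝ => h (x + s • v)) ⟪G (x + t • v), v⟫ t := by
  have h1 : HasFDerivAt h ((InnerProductSpace.toDual ℝ F) (G (x + t • v))) (x + t • v) :=
    (hasGradientAt_iff_hasFDerivAt.mp (hG _))
  have h2 : HasDerivAt (fun s : ℝ => x + s • v) v t := by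
    simpa using ((hasDerivAt_id t).smul_const v).const_add x
  exact h1.comp_hasDerivAt t h2

theorem st8_innerGrad (g : F) (z : F) : HasGradientAt (fun z => ⟪g, z⟫) g z := by
  rw [hasGradientAt_iff_hasFDerivAt]
  exact (InnerProductSpace.toDual ℝ F g).hasFDerivAt

-- descent lemma
theorem st8_descent {h : F → ℝ} {G : F → F} {L : ℝ}
    (hG : ∀ z, HasGradientAt h (G z) z)
    (hLip : ∀ a b, ‖G a - G b‖ ≤ L * ‖a - b‖) (x y : F) :
    h x ≤ h y + ⟪G y, x - y⟫ + L / 2 * ‖x - y‖ ^ 2 := by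
  set v := x - y with hv
  have hGcont : Continuous G := by
    refine (LipschitzWith.of_dist_le_mul (K := (max L 0).toNNReal) (fun a b => ?_)).continuous
    rw [dist_eq_norm, dist_eq_norm, Real.coe_toNNReal _ (le_max_right L 0)]
    exact (hLip a b).trans (by nlinarith [norm_nonneg (a-b), le_max_left L 0])
  have hderiv : ∀ t ∈ Set.uIcc (0:ℝ) 1,
      HasDerivAt (fun s : ℝ => h (y + s • v)) ⟪G (y + t • v), v⟫ t :=
    fun t _ => st8_lineDeriv hG y v t
  have hcont : Continuous fun t : ℝ => ⟪G (y + t • v), v⟫ := by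
    apply Continuous.inner
    · exact hGcont.comp (by continuity)
    · exact continuous_const
  have hint : IntervalIntegrable (fun t : ℝ => ⟪G (y + t • v), v⟫) MeasureTheory.volume 0 1 :=
    hcont.intervalIntegrable 0 1
  have hftc : ∫ t in (0:ℝ)..1, ⟪G (y + t • v), v⟫ = h (y + (1:ℝ) • v) - h (y + (0:ℝ) • v) :=
    intervalIntegral.integral_eq_sub_of_hasDerivAt hderiv hint
  have hx1 : y + (1:ℝ) • v = x := by simp [hv]
  have hy0 : y + (0:ℝ) • v = y := by simp
  rw [hx1, hy0] at hftc
  have hbound : ∫ t in (0:ℝ)..1, ⟪G (y + t • v), v⟫ ≤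
      ∫ t in (0:ℝ)..1, (⟪G y, v⟫ + L * t * ‖v‖ ^ 2) := by
    apply intervalIntegral.integral_mono_on (by norm_num) hint
    · apply IntervalIntegrable.add intervalIntegrable_const
      exact (Continuous.intervalIntegrable (by continuity) 0 1)
    · intro t ht
      have ht0 : 0 ≤ t := ht.1
      have : ⟪G (y + t • v), v⟫ - ⟪G y, v⟫ = ⟪G (y + t • v) - G y, v⟫ := by
        rw [inner_sub_left]
      have hcs : ⟪G (y + t • v) - G y, v⟫ ≤ ‖G (y + t • v) - G y‖ * ‖v‖ :=
        real_inner_le_norm _ _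
      have hlip2 : ‖G (y + t • v) - G y‖ ≤ L * (t * ‖v‖) := by
        have := hLip (y + t • v) y
        simpa [norm_smul, abs_of_nonneg ht0] using this
      nlinarith [norm_nonneg v, norm_nonneg (G (y + t • v) - G y)]
  have hval : ∫ t in (0:ℝ)..1, (⟪G y, v⟫ + L * t * ‖v‖ ^ 2) =
      ⟪G y, v⟫ + L / 2 * ‖v‖ ^ 2 := by
    rw [intervalIntegral.integral_add intervalIntegrable_const
      (Continuous.intervalIntegrable (by continuity) 0 1)]
    simp only [intervalIntegral.integral_const, smul_eq_mul]
    have : ∫ t in (0:ℝ)..1, L * t * ‖v‖ ^ 2 = L * ‖v‖^2 * ∫ t in (0:ℝ)..1, t := by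
      rw [← intervalIntegral.integral_const_mul]
      congr 1; ext t; ring
    rw [this, integral_id]
    ring
  rw [hftc, hval] at hbound
  linarith

-- first-order convexity
theorem st8_convex_lower {h : F → ℝ} {G : F → F}
    (hconv : ConvexOn ℝ Set.univ h) (hG : ∀ z, HasGradientAt h (G z) z) (x y : F) :
    h y + ⟪G y, x - y⟫ ≤ h x := by
  set φ : ℝ → ℝ := fun s => h (y + s • (x - y)) with hφ
  have hφconv : ConvexOn ℝ Set.univ φ := by
    have := hconv.comp_affineMap (AffineMap.lineMap y x : ℝ →ᵃ[ℝ] F)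
    have heq : φ = h ∘ (AffineMap.lineMap y x : ℝ →ᵃ[ℝ] F) := by
      funext s; simp [hφ, AffineMap.lineMap_apply, add_comm]
    rw [heq]
    simpa using this
  have hd : HasDerivAt φ ⟪G y, x - y⟫ 0 := by
    have := st8_lineDeriv hG y (x - y) 0
    simpa [hφ] using this
  have hslope : deriv φ 0 ≤ slope φ 0 1 :=
    hφconv.deriv_le_slope (Set.mem_univ _) (Set.mem_univ _) one_pos hd.differentiableAt
  rw [hd.deriv] at hslope
  have : slope φ 0 1 = h x - h y := by
    simp [slope_def_field, hφ]
  rw [this] at hslope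
  linarith

theorem st8_key {h : F → ℝ} {G : F → F} {L : ℝ} (hL : 0 ≤ L)
    (hconv : ConvexOn ℝ Set.univ h) (hG : ∀ z, HasGradientAt h (G z) z)
    (hLip : ∀ a b, ‖G a - G b‖ ≤ L * ‖a - b‖) (x y : F) :
    ‖G x - G y‖ ^ 2 ≤ 2 * L * (h x - h y - ⟪G y, x - y⟫) := by
  rcases eq_or_lt_of_le hL with hL0 | hLpos
  · have h0 : G x = G y := by
      have := hLip x y
      rw [← hL0] at this
      have := norm_nonneg (G x - G y)
      have heq : ‖G x - G y‖ = 0 := by linarith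
      rwa [norm_eq_zero, sub_eq_zero] at heq
    rw [h0, ← hL0]
    simp
  -- define tilted function
  set ht : F → ℝ := fun z => h z - ⟪G y, z⟫ with hht
  set Gt : F → F := fun z => G z - G y with hGt
  have hGt' : ∀ z, HasGradientAt ht (Gt z) z := by
    intro z
    rw [hasGradientAt_iff_hasFDerivAt]
    have h1 : HasFDerivAt h ((InnerProductSpace.toDual ℝ F) (G z)) z :=
      hasGradientAt_iff_hasFDerivAt.mp (hG z)
    have h2 : HasFDerivAt (fun z => ⟪G y, z⟫) ((InnerProductSpace.toDual ℝ F) (G y)) z :=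
      hasGradientAt_iff_hasFDerivAt.mp (st8_innerGrad (G y) z)
    have := h1.sub h2
    simp only [hGt, map_sub]; exact this
  have htconv : ConvexOn ℝ Set.univ ht := by
    have hlin : ConcaveOn ℝ Set.univ (fun z : F => ⟪G y, z⟫) := by
      have := ((InnerProductSpace.toDual ℝ F (G y)).toLinearMap).concaveOn (convex_univ)
      exact this
    exact hconv.sub hlin
  have htLip : ∀ a b, ‖Gt a - Gt b‖ ≤ L * ‖a - b‖ := by
    intro a b; simpa [hGt, sub_sub_sub_cancel_right] using hLip a b
  -- y is a global min of ht
  have hmin : ∀ z, ht y ≤ ht z := by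
    intro z
    have := st8_convex_lower htconv hGt' z y
    simpa [hGt] using this
  -- descent step
  set z : F := x - (1 / L) • (G x - G y) with hz
  have hdes := st8_descent hGt' htLip z x
  have h1 : ⟪Gt x, z - x⟫ = -(1 / L) * ‖G x - G y‖ ^ 2 := by
    rw [hz]
    have : x - (1 / L) • (G x - G y) - x = -((1 / L) • (G x - G y)) := by abel
    rw [this, inner_neg_right, real_inner_smul_right, hGt]
    simp only [real_inner_self_eq_norm_sq]
    ring
  have h2 : ‖z - x‖ ^ 2 = (1 / L) ^ 2 * ‖G x - G y‖ ^ 2 := by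
    rw [hz]
    have : x - (1 / L) • (G x - G y) - x = -((1 / L) • (G x - G y)) := by abel
    rw [this, norm_neg, norm_smul]
    rw [Real.norm_eq_abs, abs_of_pos (by positivity : (0:ℝ) < 1 / L)]
    ring
  rw [h1, h2] at hdes
  have hfin := (hmin z).trans hdes
  have hexp : ht x - ht y = h x - h y - ⟪G y, x - y⟫ := by
    simp [hht, inner_sub_right]
    ring
  have hLne : L ≠ 0 := ne_of_gt hLpos
  have hstep : ‖G x - G y‖ ^ 2 / (2 * L) ≤ ht x - ht y := by
    have e : -(1 / L) * ‖G x - G y‖ ^ 2 + L / 2 * ((1 / L) ^ 2 * ‖G x - G y‖ ^ 2)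
        = -(‖G x - G y‖ ^ 2 / (2 * L)) := by
      field_simp; ring
    linarith [hfin, e]
  rw [div_le_iff₀ (by positivity)] at hstep
  rw [← hexp]
  linarith [hstep]

omit [InnerProductSpace ℝ F] [CompleteSpace F] in
theorem st8_four_sq (a b c e : F) :
    ‖a + b + c + e‖ ^ 2 ≤ 4 * (‖a‖ ^ 2 + ‖b‖ ^ 2 + ‖c‖ ^ 2 + ‖e‖ ^ 2) := by
  have h1 : ‖a + b + c + e‖ ≤ ‖a‖ + ‖b‖ + ‖c‖ + ‖e‖ := by
    calc ‖a + b + c + e‖ ≤ ‖a + b + c‖ + ‖e‖ := norm_add_le _ _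
    _ ≤ ‖a + b‖ + ‖c‖ + ‖e‖ := by linarith [norm_add_le (a+b) c]
    _ ≤ ‖a‖ + ‖b‖ + ‖c‖ + ‖e‖ := by linarith [norm_add_le a b]
  nlinarith [norm_nonneg (a+b+c+e), norm_nonneg a, norm_nonneg b, norm_nonneg c,
    norm_nonneg e, sq_nonneg (‖a‖-‖b‖), sq_nonneg (‖a‖-‖c‖), sq_nonneg (‖a‖-‖e‖),
    sq_nonneg (‖b‖-‖c‖), sq_nonneg (‖b‖-‖e‖), sq_nonneg (‖c‖-‖e‖)]


end Stmt8Aux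

/-- Gradient-variation decomposition (Lemma `tedius-calculations`, first part):
for convex differentiable `L`-smooth `f₁,…,f_T` with `f₀ ≡ 0`,
`∑_{t=1}^T ‖∇f_t(w_t) − ∇f_{t−1}(w_{t−1})‖²
  ≤ ‖∇f₁(w₁)‖² + 16L ∑_{t=1}^T D_{f_t}(u_t, w_t)
    + 4L² ∑_{t=2}^T ‖u_t − u_{t−1}‖² + 4 ∑_{t=2}^T ‖∇f_t(u_{t−1}) − ∇f_{t−1}(u_{t−1})‖²`. -/
theorem stmt_8 {d : ℕ} (T : ℕ) (L : ℝ) (hL : 0 ≤ L)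
    (f : ℕ → EuclideanSpace ℝ (Fin d) → ℝ)
    (hf0 : f 0 = fun _ => (0 : ℝ))
    (hconv : ∀ t ∈ Finset.Icc 1 T, ConvexOn ℝ Set.univ (f t))
    (hdiff : ∀ t ∈ Finset.Icc 1 T, Differentiable ℝ (f t))
    (hsmooth : ∀ t ∈ Finset.Icc 1 T, ∀ x y,
      ‖gradient (f t) x - gradient (f t) y‖ ≤ L * ‖x - y‖)
    (w u : ℕ → EuclideanSpace ℝ (Fin d)) :
    ∑ t ∈ Finset.Icc 1 T, ‖gradient (f t) (w t) - gradient (f (t - 1)) (w (t - 1))‖ ^ 2 ≤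
      ‖gradient (f 1) (w 1)‖ ^ 2
      + 16 * L * ∑ t ∈ Finset.Icc 1 T,
          (f t (u t) - f t (w t) - ⟪gradient (f t) (w t), u t - w t⟫)
      + 4 * L ^ 2 * ∑ t ∈ Finset.Icc 2 T, ‖u t - u (t - 1)‖ ^ 2
      + 4 * ∑ t ∈ Finset.Icc 2 T,
          ‖gradient (f t) (u (t - 1)) - gradient (f (t - 1)) (u (t - 1))‖ ^ 2 := by
  have hgrad : ∀ t ∈ Finset.Icc 1 T, ∀ z, HasGradientAt (f t) (gradient (f t) z) z :=
    fun t ht z => ((hdiff t ht) z).hasGradientAt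
  have hDnn : ∀ t ∈ Finset.Icc 1 T,
      0 ≤ f t (u t) - f t (w t) - ⟪gradient (f t) (w t), u t - w t⟫ := by
    intro t ht
    have := st8_convex_lower (hconv t ht) (hgrad t ht) (u t) (w t)
    linarith
  have hkey : ∀ t ∈ Finset.Icc 1 T,
      ‖gradient (f t) (u t) - gradient (f t) (w t)‖ ^ 2 ≤
        2 * L * (f t (u t) - f t (w t) - ⟪gradient (f t) (w t), u t - w t⟫) :=
    fun t ht => st8_key hL (hconv t ht) (hgrad t ht) (hsmooth t ht) (u t) (w t)
  rcases Nat.eq_zero_or_pos T with hT | hT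
  · subst hT
    simp only [show Finset.Icc 1 0 = (∅ : Finset ℕ) by rfl,
      show Finset.Icc 2 0 = (∅ : Finset ℕ) by rfl,
      Finset.sum_empty, mul_zero, add_zero]
    positivity
  have hsplit : Finset.Icc 1 T = insert 1 (Finset.Icc 2 T) := by
    ext t; simp; omega
  have h1mem : (1 : ℕ) ∉ Finset.Icc 2 T := by simp
  have hg0 : gradient (f 0) (w 0) = 0 := by
    rw [hf0]; exact gradient_const _ _
  have hterm1 : ‖gradient (f 1) (w 1) - gradient (f (1 - 1)) (w (1 - 1))‖ ^ 2
      = ‖gradient (f 1) (w 1)‖ ^ 2 := by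
    norm_num [hg0]
  have hper : ∀ t ∈ Finset.Icc 2 T,
      ‖gradient (f t) (w t) - gradient (f (t - 1)) (w (t - 1))‖ ^ 2 ≤
        8 * L * (f t (u t) - f t (w t) - ⟪gradient (f t) (w t), u t - w t⟫)
        + 8 * L * (f (t-1) (u (t-1)) - f (t-1) (w (t-1))
            - ⟪gradient (f (t-1)) (w (t-1)), u (t-1) - w (t-1)⟫)
        + 4 * L ^ 2 * ‖u t - u (t - 1)‖ ^ 2
        + 4 * ‖gradient (f t) (u (t - 1)) - gradient (f (t - 1)) (u (t - 1))‖ ^ 2 := by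
    intro t ht
    simp only [Finset.mem_Icc] at ht
    have htT : t ∈ Finset.Icc 1 T := by simp; omega
    have ht1T : t - 1 ∈ Finset.Icc 1 T := by simp; omega
    have hdec : gradient (f t) (w t) - gradient (f (t - 1)) (w (t - 1)) =
        (gradient (f t) (w t) - gradient (f t) (u t))
        + (gradient (f t) (u t) - gradient (f t) (u (t - 1)))
        + (gradient (f t) (u (t - 1)) - gradient (f (t - 1)) (u (t - 1)))
        + (gradient (f (t - 1)) (u (t - 1)) - gradient (f (t - 1)) (w (t - 1))) := by
      abel
    rw [hdec]
    have h4 := st8_four_sq (gradient (f t) (w t) - gradient (f t) (u t))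
      (gradient (f t) (u t) - gradient (f t) (u (t - 1)))
      (gradient (f t) (u (t - 1)) - gradient (f (t - 1)) (u (t - 1)))
      (gradient (f (t - 1)) (u (t - 1)) - gradient (f (t - 1)) (w (t - 1)))
    have hA := hkey t htT
    rw [norm_sub_rev] at hA
    have hE := hkey (t - 1) ht1T
    have hb1 := hsmooth t htT (u t) (u (t - 1))
    have hb2 : ‖gradient (f t) (u t) - gradient (f t) (u (t - 1))‖ ^ 2 ≤
        L ^ 2 * ‖u t - u (t - 1)‖ ^ 2 := by
      have := norm_nonneg (u t - u (t - 1))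
      have := norm_nonneg (gradient (f t) (u t) - gradient (f t) (u (t - 1)))
      nlinarith
    nlinarith
  have hreindex : ∑ t ∈ Finset.Icc 2 T, (f (t-1) (u (t-1)) - f (t-1) (w (t-1))
        - ⟪gradient (f (t-1)) (w (t-1)), u (t-1) - w (t-1)⟫)
      = ∑ t ∈ Finset.Icc 1 (T - 1), (f t (u t) - f t (w t)
        - ⟪gradient (f t) (w t), u t - w t⟫) := by
    apply Finset.sum_bij' (fun t (_ : t ∈ Finset.Icc 2 T) => t - 1)
      (fun t (_ : t ∈ Finset.Icc 1 (T - 1)) => t + 1) <;>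
      intro a ha <;> simp at ha ⊢ <;> omega
  have hsub1 : ∑ t ∈ Finset.Icc 1 (T - 1), (f t (u t) - f t (w t)
        - ⟪gradient (f t) (w t), u t - w t⟫)
      ≤ ∑ t ∈ Finset.Icc 1 T, (f t (u t) - f t (w t)
        - ⟪gradient (f t) (w t), u t - w t⟫) := by
    apply Finset.sum_le_sum_of_subset_of_nonneg
    · exact Finset.Icc_subset_Icc_right (by omega)
    · intro t ht _; exact hDnn t ht
  have hsub2 : ∑ t ∈ Finset.Icc 2 T, (f t (u t) - f t (w t)
        - ⟪gradient (f t) (w t), u t - w t⟫)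
      ≤ ∑ t ∈ Finset.Icc 1 T, (f t (u t) - f t (w t)
        - ⟪gradient (f t) (w t), u t - w t⟫) := by
    apply Finset.sum_le_sum_of_subset_of_nonneg
    · exact Finset.Icc_subset_Icc_left (by omega)
    · intro t ht _; exact hDnn t ht
  have hsumper := Finset.sum_le_sum hper
  rw [hsplit, Finset.sum_insert h1mem, hterm1, ← hsplit]
  rw [Finset.sum_add_distrib, Finset.sum_add_distrib, Finset.sum_add_distrib,
    ← Finset.mul_sum, ← Finset.mul_sum, ← Finset.mul_sum, ← Finset.mul_sum,
    hreindex] at hsumper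
  have hLs1 := mul_le_mul_of_nonneg_left hsub2 (by linarith : (0:ℝ) ≤ 8 * L)
  have hLs2 := mul_le_mul_of_nonneg_left hsub1 (by linarith : (0:ℝ) ≤ 8 * L)
  linarith
end

section
/- Let f₁, …, f_T : ℝᵈ → ℝ be differentiable, convex, L-smooth functions each bounded below, and let w₁, …, w_T and u₁, …, u_T be points in ℝᵈ, with f₀ ≡ 0. Then ∑_{t=1}^T ‖∇f_t(w_t) − ∇f_{t−1}(w_{t−1})‖² ≤ 16L·∑_{t=1}^T (f_t(u_t) − inf_w f_t(w)) + 16L·∑_{t=1}^T D_{f_t}(u_t, w_t). -/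
open Finset RealInnerProductSpace

section Helpers

variable {F : Type*} [NormedAddCommGroup F] [InnerProductSpace ℝ F] [CompleteSpace F]

private lemma line_hasDerivAt {f : F → ℝ} (hf : Differentiable ℝ f) (x v : F) (s : ℝ) :
    HasDerivAt (fun r : ℝ => f (x + r • v)) ⟪gradient f (x + s • v), v⟫ s := by
  have h1 : HasFDerivAt f (InnerProductSpace.toDual ℝ F (gradient f (x + s • v))) (x + s • v) :=
    hasGradientAt_iff_hasFDerivAt.1 (hf _).hasGradientAt
  have h2 : HasDerivAt (fun r : ℝ => x + r • v) v s := by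
    simpa using ((hasDerivAt_id s).smul_const v).const_add x
  have h3 := h1.comp_hasDerivAt s h2
  simpa [Function.comp_def, InnerProductSpace.toDual_apply_apply] using h3

private lemma one_dim_lower {g : ℝ → ℝ} (hg : ConvexOn ℝ Set.univ g) {g0 : ℝ}
    (hd : HasDerivAt g g0 0) : g 0 + g0 ≤ g 1 := by
  have h := hg.le_slope_of_hasDerivAt (Set.mem_univ 0) (Set.mem_univ 1) one_pos hd
  rw [slope_def_field] at h
  simp at h
  linarith

private lemma first_order {f : F → ℝ} (hconv : ConvexOn ℝ Set.univ f)
    (hf : Differentiable ℝ f) (x y : F) :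
    f x + ⟪gradient f x, y - x⟫ ≤ f y := by
  set v := y - x with hv
  have hd := line_hasDerivAt hf x v 0
  rw [zero_smul, add_zero] at hd
  have hg : ConvexOn ℝ Set.univ (fun r : ℝ => f (x + r • v)) := by
    have h := hconv.comp_affineMap (AffineMap.lineMap x (x + v) : ℝ →ᵃ[ℝ] F)
    have heq : (f ∘ (AffineMap.lineMap x (x + v) : ℝ →ᵃ[ℝ] F)) = fun r : ℝ => f (x + r • v) := by
      funext r
      simp [AffineMap.lineMap_apply, add_comm]
    rw [heq] at h
    simpa using h
  have h := one_dim_lower hg hd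
  simp only [zero_smul, add_zero, one_smul] at h
  have : x + v = y := by rw [hv]; abel
  rw [this] at h
  exact h

private lemma descent {f : F → ℝ} {L : ℝ} (hL : 0 ≤ L) (hf : Differentiable ℝ f)
    (hsm : ∀ x y, ‖gradient f x - gradient f y‖ ≤ L * ‖x - y‖) (x y : F) :
    f y ≤ f x + ⟪gradient f x, y - x⟫ + L / 2 * ‖y - x‖ ^ 2 := by
  set v := y - x with hv
  set p : ℝ → ℝ := fun s => L * ‖v‖ ^ 2 / 2 * s ^ 2 - f (x + s • v) with hp
  have hder : ∀ s, HasDerivAt p (L * ‖v‖ ^ 2 * s - ⟪gradient f (x + s • v), v⟫) s := by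
    intro s
    have h1 : HasDerivAt (fun s : ℝ => L * ‖v‖ ^ 2 / 2 * s ^ 2) (L * ‖v‖ ^ 2 * s) s := by
      have := (hasDerivAt_pow 2 s).const_mul (L * ‖v‖ ^ 2 / 2)
      convert this using 1
      · rfl
      · rfl
      · ring
    exact h1.sub (line_hasDerivAt hf x v s)
  have hdiffp : Differentiable ℝ p := fun s => (hder s).differentiableAt
  have hderiv : deriv p = fun s => L * ‖v‖ ^ 2 * s - ⟪gradient f (x + s • v), v⟫ :=
    funext fun s => (hder s).deriv
  have hmono : Monotone (deriv p) := by
    rw [hderiv]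
    intro s t hst
    have h1 : ⟪gradient f (x + t • v) - gradient f (x + s • v), v⟫ ≤ L * ‖v‖ ^ 2 * (t - s) := by
      calc ⟪gradient f (x + t • v) - gradient f (x + s • v), v⟫
          ≤ ‖gradient f (x + t • v) - gradient f (x + s • v)‖ * ‖v‖ := real_inner_le_norm _ _
        _ ≤ (L * ‖x + t • v - (x + s • v)‖) * ‖v‖ := by
            apply mul_le_mul_of_nonneg_right (hsm _ _) (norm_nonneg v)
        _ = L * ‖v‖ ^ 2 * (t - s) := by
            have : x + t • v - (x + s • v) = (t - s) • v := by
              rw [sub_smul]; abel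
            rw [this, norm_smul, Real.norm_eq_abs, abs_of_nonneg (by linarith : (0:ℝ) ≤ t - s)]
            ring
    rw [inner_sub_left, mul_sub] at h1
    simp only
    linarith
  have hconvp : ConvexOn ℝ Set.univ p := hmono.convexOn_univ_of_deriv hdiffp
  have h0 := one_dim_lower hconvp (by simpa using hder 0)
  have hxv : x + v = y := by rw [hv]; abel
  norm_num [hp, hxv] at h0
  have hfg : (fderiv ℝ f x) v = ⟪gradient f x, v⟫ := by
    rw [← InnerProductSpace.toDual_apply_apply, toDual_gradient]
  linarith

private lemma selfbound {f : F → ℝ} {L m : ℝ} (hL : 0 ≤ L) (hf : Differentiable ℝ f)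
    (hsm : ∀ x y, ‖gradient f x - gradient f y‖ ≤ L * ‖x - y‖) (hm : ∀ z, m ≤ f z) (x : F) :
    ‖gradient f x‖ ^ 2 ≤ 2 * L * (f x - m) := by
  set g := gradient f x with hg
  have key : ∀ s : ℝ, 0 ≤ s →
      m ≤ f x - s * ‖g‖ ^ 2 + L / 2 * (s ^ 2 * ‖g‖ ^ 2) := by
    intro s hs
    have h := descent hL hf hsm x (x - s • g)
    have h1 : x - s • g - x = -(s • g) := by abel
    rw [h1] at h
    have h2 : ⟪g, -(s • g)⟫ = -(s * ‖g‖ ^ 2) := by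
      rw [inner_neg_right, real_inner_smul_right, real_inner_self_eq_norm_sq]
    have h3 : ‖(-(s • g))‖ ^ 2 = s ^ 2 * ‖g‖ ^ 2 := by
      rw [norm_neg, norm_smul, Real.norm_eq_abs, mul_pow, sq_abs]
    rw [h2, h3] at h
    have := hm (x - s • g)
    linarith
  rcases eq_or_lt_of_le hL with h0 | hpos
  · -- L = 0
    have hg2 : ‖g‖ ^ 2 ≤ 0 := by
      by_contra hc
      push_neg at hc
      have hfx := hm x
      have h := key ((f x - m + 1) / ‖g‖ ^ 2) (le_of_lt (div_pos (by linarith) hc))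
      rw [div_mul_cancel₀ _ (ne_of_gt hc)] at h
      rw [← h0] at h
      norm_num at h
      linarith
    have hfx := hm x
    nlinarith [sq_nonneg ‖g‖]
  · have h := key (1 / L) (by positivity)
    have h' : 1 / (2 * L) * ‖g‖ ^ 2 ≤ f x - m := by
      have e : f x - 1 / L * ‖g‖ ^ 2 + L / 2 * ((1 / L) ^ 2 * ‖g‖ ^ 2)
          = f x - 1 / (2 * L) * ‖g‖ ^ 2 := by
        field_simp
        ring
      linarith [h, e.symm.le, e.le]
    have h2L : (2 * L) * (1 / (2 * L) * ‖g‖ ^ 2) = ‖g‖ ^ 2 := by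
      field_simp
    have hmul := mul_le_mul_of_nonneg_left h' (by linarith : (0:ℝ) ≤ 2 * L)
    rw [h2L] at hmul
    linarith

private lemma inner_hasFDerivAt (b x : F) :
    HasFDerivAt (fun z : F => ⟪b, z⟫) (InnerProductSpace.toDual ℝ F b) x := by
  have h := (InnerProductSpace.toDual ℝ F b).hasFDerivAt (x := x)
  have : ⇑(InnerProductSpace.toDual ℝ F b) = fun z : F => ⟪b, z⟫ := by
    funext z; exact InnerProductSpace.toDual_apply_apply
  rwa [this] at h

private lemma grad_shift {f : F → ℝ} (hf : Differentiable ℝ f) (b x : F) :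
    gradient (fun z => f z - ⟪b, z⟫) x = gradient f x - b := by
  have h1 := hasGradientAt_iff_hasFDerivAt.1 (hf x).hasGradientAt
  have h3 := h1.sub (inner_hasFDerivAt b x)
  have h4 : HasFDerivAt (fun z => f z - ⟪b, z⟫)
      (InnerProductSpace.toDual ℝ F (gradient f x - b)) x := by
    rw [map_sub]; exact h3
  exact (hasGradientAt_iff_hasFDerivAt.2 h4).gradient

private lemma coco {f : F → ℝ} {L : ℝ} (hL : 0 ≤ L) (hconv : ConvexOn ℝ Set.univ f)
    (hf : Differentiable ℝ f)
    (hsm : ∀ x y, ‖gradient f x - gradient f y‖ ≤ L * ‖x - y‖) (x y : F) :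
    ‖gradient f x - gradient f y‖ ^ 2 ≤ 2 * L * (f x - f y - ⟪gradient f y, x - y⟫) := by
  set b := gradient f y with hb
  set φ : F → ℝ := fun z => f z - ⟪b, z⟫ with hφ
  have hφdiff : Differentiable ℝ φ := fun z =>
    ((hf z).hasFDerivAt.sub (inner_hasFDerivAt b z)).differentiableAt
  have hφgrad : ∀ z, gradient φ z = gradient f z - b := fun z => grad_shift hf b z
  have hlin : ConvexOn ℝ Set.univ (fun z : F => -⟪b, z⟫) := by
    refine ⟨convex_univ, fun p _ q _ a c ha hc hac => le_of_eq ?_⟩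
    simp [inner_add_right, real_inner_smul_right]
    ring
  have hφconv : ConvexOn ℝ Set.univ φ := by
    have := hconv.add hlin
    simpa [hφ, sub_eq_add_neg, Pi.add_def] using this
  have hφsm : ∀ p q, ‖gradient φ p - gradient φ q‖ ≤ L * ‖p - q‖ := by
    intro p q
    rw [hφgrad, hφgrad, sub_sub_sub_cancel_right]
    exact hsm p q
  have hmin : ∀ z, φ y ≤ φ z := by
    intro z
    have h := first_order hφconv hφdiff y z
    rw [hφgrad y, ← hb, sub_self] at h
    simpa using h
  have h := selfbound hL hφdiff hφsm hmin x
  rw [hφgrad] at h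
  have heq : φ x - φ y = f x - f y - ⟪b, x - y⟫ := by
    simp only [hφ, inner_sub_right]
    ring
  rw [show (2 : ℝ) * L * (φ x - φ y) = 2 * L * (f x - f y - ⟪b, x - y⟫) by rw [heq]] at h
  exact h

private lemma perpoint {f : F → ℝ} {L m : ℝ} (hL : 0 ≤ L) (hconv : ConvexOn ℝ Set.univ f)
    (hf : Differentiable ℝ f)
    (hsm : ∀ x y, ‖gradient f x - gradient f y‖ ≤ L * ‖x - y‖) (hm : ∀ z, m ≤ f z)
    (w u : F) :
    ‖gradient f w‖ ^ 2 ≤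
      4 * L * ((f u - m) + (f u - f w - ⟪gradient f w, u - w⟫)) := by
  have h1 : ‖gradient f u - gradient f w‖ ^ 2 ≤
      2 * L * (f u - f w - ⟪gradient f w, u - w⟫) := coco hL hconv hf hsm u w
  have h2 : ‖gradient f u‖ ^ 2 ≤ 2 * L * (f u - m) := selfbound hL hf hsm hm u
  have h3 : ‖gradient f w‖ ≤ ‖gradient f u - gradient f w‖ + ‖gradient f u‖ := by
    have := norm_add_le (gradient f u - gradient f w) (gradient f u)
    calc ‖gradient f w‖ = ‖-(gradient f u - gradient f w) + gradient f u‖ := by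
          congr 1; abel
      _ ≤ ‖-(gradient f u - gradient f w)‖ + ‖gradient f u‖ := norm_add_le _ _
      _ = ‖gradient f u - gradient f w‖ + ‖gradient f u‖ := by rw [norm_neg]
  nlinarith [h1, h2, mul_self_le_mul_self (norm_nonneg (gradient f w)) h3,
    sq_nonneg (‖gradient f u - gradient f w‖ - ‖gradient f u‖),
    norm_nonneg (gradient f u - gradient f w), norm_nonneg (gradient f u)]

end Helpers

private lemma aux_stmt9 {d : ℕ} (T : ℕ) (L : ℝ) (hL : 0 ≤ L)
    (f : ℕ → EuclideanSpace ℝ (Fin d) → ℝ)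
    (hf0 : f 0 = fun _ => (0 : ℝ))
    (hconv : ∀ t ∈ Finset.Icc 1 T, ConvexOn ℝ Set.univ (f t))
    (hdiff : ∀ t ∈ Finset.Icc 1 T, Differentiable ℝ (f t))
    (hsmooth : ∀ t ∈ Finset.Icc 1 T, ∀ x y,
      ‖gradient (f t) x - gradient (f t) y‖ ≤ L * ‖x - y‖)
    (hbdd : ∀ t ∈ Finset.Icc 1 T, BddBelow (Set.range (f t)))
    (w u : ℕ → EuclideanSpace ℝ (Fin d)) :
    ∑ t ∈ Finset.Icc 1 T, ‖gradient (f t) (w t) - gradient (f (t - 1)) (w (t - 1))‖ ^ 2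
      + 2 * ‖gradient (f T) (w T)‖ ^ 2 ≤
      16 * L * ∑ t ∈ Finset.Icc 1 T, (f t (u t) - ⨅ v, f t v)
      + 16 * L * ∑ t ∈ Finset.Icc 1 T,
          (f t (u t) - f t (w t) - ⟪gradient (f t) (w t), u t - w t⟫) := by
  induction T with
  | zero =>
    simp [hf0, gradient_const]
  | succ n ih =>
    have hsub : ∀ t, t ∈ Finset.Icc 1 n → t ∈ Finset.Icc 1 (n + 1) := by
      intro t ht
      simp only [Finset.mem_Icc] at *
      omega
    have IH := ih (fun t ht => hconv t (hsub t ht)) (fun t ht => hdiff t (hsub t ht))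
      (fun t ht => hsmooth t (hsub t ht)) (fun t ht => hbdd t (hsub t ht))
    have hn1 : (n + 1) ∈ Finset.Icc 1 (n + 1) := by simp
    have hm : ∀ z, (⨅ v, f (n + 1) v) ≤ f (n + 1) z := fun z => ciInf_le (hbdd _ hn1) z
    have hBnd : ‖gradient (f (n + 1)) (w (n + 1))‖ ^ 2 ≤
        4 * L * ((f (n + 1) (u (n + 1)) - ⨅ v, f (n + 1) v)
          + (f (n + 1) (u (n + 1)) - f (n + 1) (w (n + 1))
            - ⟪gradient (f (n + 1)) (w (n + 1)), u (n + 1) - w (n + 1)⟫)) :=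
      perpoint hL (hconv _ hn1) (hdiff _ hn1) (hsmooth _ hn1) hm (w (n + 1)) (u (n + 1))
    have hnew : ‖gradient (f (n + 1)) (w (n + 1)) - gradient (f (n + 1 - 1)) (w (n + 1 - 1))‖ ^ 2
        ≤ 2 * ‖gradient (f (n + 1)) (w (n + 1))‖ ^ 2 + 2 * ‖gradient (f n) (w n)‖ ^ 2 := by
      simp only [Nat.add_sub_cancel]
      have h := norm_sub_le (gradient (f (n + 1)) (w (n + 1))) (gradient (f n) (w n))
      nlinarith [mul_self_le_mul_self
          (norm_nonneg (gradient (f (n + 1)) (w (n + 1)) - gradient (f n) (w n))) h,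
        sq_nonneg (‖gradient (f (n + 1)) (w (n + 1))‖ - ‖gradient (f n) (w n)‖),
        norm_nonneg (gradient (f (n + 1)) (w (n + 1))), norm_nonneg (gradient (f n) (w n))]
    rw [Finset.sum_Icc_succ_top (by omega : 1 ≤ n + 1),
      Finset.sum_Icc_succ_top (by omega : 1 ≤ n + 1),
      Finset.sum_Icc_succ_top (by omega : 1 ≤ n + 1)]
    nlinarith [IH, hBnd, hnew]

/-- Gradient-variation decomposition via comparator loss (Lemma `tedius-calculations`,
second part): for convex differentiable `L`-smooth `f₁,…,f_T` bounded below, `f₀ ≡ 0`,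
`∑_{t=1}^T ‖∇f_t(w_t) − ∇f_{t−1}(w_{t−1})‖²
  ≤ 16L ∑_{t=1}^T (f_t(u_t) − inf f_t) + 16L ∑_{t=1}^T D_{f_t}(u_t, w_t)`. -/
theorem stmt_9 {d : ℕ} (T : ℕ) (L : ℝ) (hL : 0 ≤ L)
    (f : ℕ → EuclideanSpace ℝ (Fin d) → ℝ)
    (hf0 : f 0 = fun _ => (0 : ℝ))
    (hconv : ∀ t ∈ Finset.Icc 1 T, ConvexOn ℝ Set.univ (f t))
    (hdiff : ∀ t ∈ Finset.Icc 1 T, Differentiable ℝ (f t))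
    (hsmooth : ∀ t ∈ Finset.Icc 1 T, ∀ x y,
      ‖gradient (f t) x - gradient (f t) y‖ ≤ L * ‖x - y‖)
    (hbdd : ∀ t ∈ Finset.Icc 1 T, BddBelow (Set.range (f t)))
    (w u : ℕ → EuclideanSpace ℝ (Fin d)) :
    ∑ t ∈ Finset.Icc 1 T, ‖gradient (f t) (w t) - gradient (f (t - 1)) (w (t - 1))‖ ^ 2 ≤
      16 * L * ∑ t ∈ Finset.Icc 1 T, (f t (u t) - ⨅ v, f t v)
      + 16 * L * ∑ t ∈ Finset.Icc 1 T,
          (f t (u t) - f t (w t) - ⟪gradient (f t) (w t), u t - w t⟫) := by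
  have h := aux_stmt9 T L hL f hf0 hconv hdiff hsmooth hbdd w u
  nlinarith [sq_nonneg ‖gradient (f T) (w T)‖]
end

section
/- Suppose an algorithm's regret against comparator u ∈ ℝᵈ satisfies Reg_T(u) ≤ A(u) + B(u)·√(∑_{t=1}^T ‖∇f_t(w_t) − ∇f_{t−1}(w_{t−1})‖²) − ∑_{t=1}^T D_{f_t}(u, w_t), where the f_t are convex, differentiable, L-smooth with gradients bounded by G, and f₀ ≡ 0. Then Reg_T(u) ≤ A(u) + 4L·B(u)² + 2B(u)·√(G² + ∑_{t=2}^T ‖∇f_t(u) − ∇f_{t−1}(u)‖²). -/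
open Finset RealInnerProductSpace intervalIntegral

variable {d : ℕ}
local notation "E" => EuclideanSpace ℝ (Fin d)

lemma aux_line (f : EuclideanSpace ℝ (Fin d) → ℝ) (hd : Differentiable ℝ f)
    (x v : EuclideanSpace ℝ (Fin d)) (s : ℝ) :
    HasDerivAt (fun s : ℝ => f (x + s • v)) ⟪gradient f (x + s • v), v⟫ s := by
  have hF : HasFDerivAt f (InnerProductSpace.toDual ℝ _ (gradient f (x + s • v))) (x + s • v) :=
    (hasGradientAt_iff_hasFDerivAt.mp (hd _).hasGradientAt)
  have hc : HasDerivAt (fun s : ℝ => x + s • v) v s := by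
    simpa using ((hasDerivAt_id s).smul_const v).const_add x
  exact (hF.comp_hasDerivAt s hc).congr_deriv (by simp [InnerProductSpace.toDual_apply_apply])

lemma convex_grad_ineq (f : EuclideanSpace ℝ (Fin d) → ℝ)
    (hc : ConvexOn ℝ Set.univ f) (hd : Differentiable ℝ f)
    (x y : EuclideanSpace ℝ (Fin d)) :
    f x + ⟪gradient f x, y - x⟫ ≤ f y := by
  set g : ℝ → ℝ := fun s => f (x + s • (y - x)) with hg
  have hgconv : ConvexOn ℝ Set.univ g := by
    have := hc.comp_affineMap (AffineMap.lineMap x y : ℝ →ᵃ[ℝ] _)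
    have heq : (f ∘ (AffineMap.lineMap x y : ℝ →ᵃ[ℝ] _)) = g := by
      funext s
      simp [hg, AffineMap.lineMap_apply, add_comm]
    rwa [Set.preimage_univ, heq] at this
  have hder : HasDerivAt g ⟪gradient f x, y - x⟫ 0 := by
    have := aux_line f hd x (y - x) 0
    simpa using this
  have hslope := hgconv.le_slope_of_hasDerivAt (Set.mem_univ (0:ℝ)) (Set.mem_univ (1:ℝ))
    one_pos hder
  have : slope g 0 1 = f y - f x := by
    simp [slope_def_field, hg]
  rw [this] at hslope
  linarith
lemma descent_lemma {d : ℕ} {L : ℝ} (hL : 0 ≤ L) (f : EuclideanSpace ℝ (Fin d) → ℝ)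
    (hd : Differentiable ℝ f)
    (hs : ∀ a b, ‖gradient f a - gradient f b‖ ≤ L * ‖a - b‖)
    (x y : EuclideanSpace ℝ (Fin d)) :
    f y ≤ f x + ⟪gradient f x, y - x⟫ + L / 2 * ‖y - x‖ ^ 2 := by
  set v := y - x with hv
  have hlip : LipschitzWith L.toNNReal (gradient f) := by
    apply LipschitzWith.of_dist_le_mul
    intro a b
    rw [dist_eq_norm, dist_eq_norm, Real.coe_toNNReal _ hL]
    exact hs a b
  have hcontG : Continuous fun s : ℝ => (⟪gradient f (x + s • v), v⟫ : ℝ) := by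
    apply Continuous.inner
    · exact hlip.continuous.comp (by continuity)
    · exact continuous_const
  have hftc : ∫ s in (0:ℝ)..1, (⟪gradient f (x + s • v), v⟫ : ℝ) = f (x + (1:ℝ) • v) - f (x + (0:ℝ) • v) := by
    apply integral_eq_sub_of_hasDerivAt (f := fun s : ℝ => f (x + s • v))
    · intro s _
      exact aux_line f hd x v s
    · exact hcontG.intervalIntegrable 0 1
  have h1 : x + (1:ℝ) • v = y := by simp [hv]
  have h0 : x + (0:ℝ) • v = x := by simp
  rw [h1, h0] at hftc
  have hmono : ∫ s in (0:ℝ)..1, (⟪gradient f (x + s • v), v⟫ : ℝ) ≤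
      ∫ s in (0:ℝ)..1, (⟪gradient f x, v⟫ + L * s * ‖v‖ ^ 2) := by
    apply integral_mono_on (by norm_num)
    · exact hcontG.intervalIntegrable 0 1
    · exact (by continuity : Continuous fun s : ℝ => (⟪gradient f x, v⟫ + L * s * ‖v‖ ^ 2)).intervalIntegrable 0 1
    · intro s hsm
      have hs0 : 0 ≤ s := hsm.1
      have key : (⟪gradient f (x + s • v) - gradient f x, v⟫ : ℝ) ≤ L * s * ‖v‖ ^ 2 := by
        calc (⟪gradient f (x + s • v) - gradient f x, v⟫ : ℝ)
            ≤ ‖gradient f (x + s • v) - gradient f x‖ * ‖v‖ := real_inner_le_norm _ _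
          _ ≤ (L * ‖x + s • v - x‖) * ‖v‖ := by
              apply mul_le_mul_of_nonneg_right (hs _ _) (norm_nonneg _)
          _ = L * s * ‖v‖ ^ 2 := by
              rw [add_sub_cancel_left, norm_smul, Real.norm_eq_abs, abs_of_nonneg hs0]
              ring
      have := inner_sub_left (𝕜 := ℝ) (gradient f (x + s • v)) (gradient f x) v
      rw [this] at key
      linarith
  have hint : ∫ s in (0:ℝ)..1, (⟪gradient f x, v⟫ + L * s * ‖v‖ ^ 2) =
      ⟪gradient f x, v⟫ + L / 2 * ‖v‖ ^ 2 := by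
    rw [integral_add (intervalIntegrable_const) (by
      simpa using (Continuous.intervalIntegrable (by continuity) 0 1 :
        IntervalIntegrable (fun s : ℝ => L * s * ‖v‖ ^ 2) MeasureTheory.volume 0 1))]
    rw [integral_const]
    have : ∫ s in (0:ℝ)..1, L * s * ‖v‖ ^ 2 = (∫ s in (0:ℝ)..1, s) * (L * ‖v‖ ^ 2) := by
      rw [← integral_mul_const]
      congr 1; funext s; ring
    rw [this, integral_id]
    norm_num
    ring
  rw [hint] at hmono
  rw [hftc] at hmono
  linarith
lemma coco_s11 {d : ℕ} {L : ℝ} (hL : 0 < L) (f : EuclideanSpace ℝ (Fin d) → ℝ)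
    (hc : ConvexOn ℝ Set.univ f) (hd : Differentiable ℝ f)
    (hs : ∀ a b, ‖gradient f a - gradient f b‖ ≤ L * ‖a - b‖)
    (u w : EuclideanSpace ℝ (Fin d)) :
    ‖gradient f u - gradient f w‖ ^ 2 ≤
      2 * L * (f u - f w - ⟪gradient f w, u - w⟫) := by
  set g := gradient f u - gradient f w with hgdef
  set v := u - (1 / L) • g with hvdef
  have hdesc := descent_lemma hL.le f hd hs u v
  have hconvw := convex_grad_ineq f hc hd w v
  have hvu : v - u = -((1/L) • g) := by rw [hvdef]; abel
  have hnorm : ‖v - u‖ ^ 2 = (1 / L) ^ 2 * ‖g‖ ^ 2 := by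
    rw [hvu, norm_neg, norm_smul, Real.norm_eq_abs, abs_of_nonneg (by positivity), mul_pow]
  have hinner1 : (⟪gradient f u, v - u⟫ : ℝ) = -(1/L) * ⟪gradient f u, g⟫ := by
    rw [hvu, inner_neg_right, real_inner_smul_right]; ring
  have hinner2 : (⟪gradient f w, v - w⟫ : ℝ) = ⟪gradient f w, u - w⟫ - (1/L) * ⟪gradient f w, g⟫ := by
    have : v - w = (u - w) + -((1/L) • g) := by rw [hvdef]; abel
    rw [this, inner_add_right, inner_neg_right, real_inner_smul_right]; ring
  have hgg : (⟪gradient f u, g⟫ : ℝ) - ⟪gradient f w, g⟫ = ‖g‖ ^ 2 := by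
    rw [← inner_sub_left, ← hgdef, real_inner_self_eq_norm_sq]
  rw [hinner1, hnorm] at hdesc
  rw [hinner2] at hconvw
  have hL' : L ≠ 0 := hL.ne'
  -- combine: f w + ⟪∇f w,u-w⟫ - (1/L)⟪∇f w,g⟫ ≤ f v ≤ f u - (1/L)⟪∇f u,g⟫ + 1/(2L)‖g‖²
  have : (1/L) * (⟪gradient f u, g⟫ - ⟪gradient f w, g⟫) - L/2 * ((1/L)^2 * ‖g‖^2)
      ≤ f u - f w - ⟪gradient f w, u - w⟫ := by linarith
  rw [hgg] at this
  have hsimp : (1/L) * ‖g‖^2 - L/2 * ((1/L)^2 * ‖g‖^2) = ‖g‖^2 / (2*L) := by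
    field_simp; ring
  rw [hsimp] at this
  have := mul_le_mul_of_nonneg_left this (by positivity : (0:ℝ) ≤ 2*L)
  calc ‖g‖ ^ 2 = 2 * L * (‖g‖ ^ 2 / (2 * L)) := by field_simp
    _ ≤ 2 * L * (f u - f w - ⟪gradient f w, u - w⟫) := this

lemma sqrt_add_le' {a b : ℝ} (ha : 0 ≤ a) (hb : 0 ≤ b) :
    Real.sqrt (a + b) ≤ Real.sqrt a + Real.sqrt b := by
  have h : a + b ≤ (Real.sqrt a + Real.sqrt b) ^ 2 := by
    nlinarith [Real.sq_sqrt ha, Real.sq_sqrt hb, Real.sqrt_nonneg a, Real.sqrt_nonneg b]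
  calc Real.sqrt (a + b) ≤ Real.sqrt ((Real.sqrt a + Real.sqrt b) ^ 2) := Real.sqrt_le_sqrt h
    _ = Real.sqrt a + Real.sqrt b := Real.sqrt_sq (by positivity)

lemma sq2 {d : ℕ} (a b : EuclideanSpace ℝ (Fin d)) :
    ‖a + b‖ ^ 2 ≤ 2 * ‖a‖ ^ 2 + 2 * ‖b‖ ^ 2 := by
  nlinarith [norm_add_le a b, norm_nonneg a, norm_nonneg b, norm_nonneg (a + b),
    sq_nonneg (‖a‖ - ‖b‖)]

lemma sq3 {d : ℕ} (a b c : EuclideanSpace ℝ (Fin d)) :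
    ‖a + b + c‖ ^ 2 ≤ 3 * ‖a‖ ^ 2 + 3 * ‖b‖ ^ 2 + 3 * ‖c‖ ^ 2 := by
  have h1 : ‖a + b + c‖ ≤ ‖a‖ + ‖b‖ + ‖c‖ :=
    (norm_add_le _ _).trans (by gcongr; exact norm_add_le a b)
  nlinarith [norm_nonneg a, norm_nonneg b, norm_nonneg c, norm_nonneg (a + b + c),
    sq_nonneg (‖a‖ - ‖b‖), sq_nonneg (‖a‖ - ‖c‖), sq_nonneg (‖b‖ - ‖c‖)]

set_option maxHeartbeats 1000000 in
/-- Static-comparator optimistic-to-gradient-variation reduction: if the regret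
against `u` satisfies
`Reg ≤ A + B √(∑_t ‖∇f_t(w_t) − ∇f_{t−1}(w_{t−1})‖²) − ∑_t D_{f_t}(u, w_t)`
for convex differentiable `L`-smooth losses with `G`-bounded gradients and `f₀ ≡ 0`,
then `Reg ≤ A + 4 L B² + 2 B √(G² + ∑_{t=2}^T ‖∇f_t(u) − ∇f_{t−1}(u)‖²)`. -/
theorem stmt_11 {d : ℕ} (T : ℕ) (L G A B : ℝ) (hL : 0 < L) (hG : 0 ≤ G)
    (hA : 0 ≤ A) (hB : 0 ≤ B)
    (f : ℕ → EuclideanSpace ℝ (Fin d) → ℝ)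
    (hf0 : f 0 = fun _ => (0 : ℝ))
    (hconv : ∀ t ∈ Finset.Icc 1 T, ConvexOn ℝ Set.univ (f t))
    (hdiff : ∀ t ∈ Finset.Icc 1 T, Differentiable ℝ (f t))
    (hsmooth : ∀ t ∈ Finset.Icc 1 T, ∀ x y,
      ‖gradient (f t) x - gradient (f t) y‖ ≤ L * ‖x - y‖)
    (hgrad : ∀ t ∈ Finset.Icc 1 T, ∀ x, ‖gradient (f t) x‖ ≤ G)
    (w : ℕ → EuclideanSpace ℝ (Fin d)) (u : EuclideanSpace ℝ (Fin d))
    (hreg : ∑ t ∈ Finset.Icc 1 T, (f t (w t) - f t u) ≤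
      A + B * Real.sqrt (∑ t ∈ Finset.Icc 1 T,
          ‖gradient (f t) (w t) - gradient (f (t - 1)) (w (t - 1))‖ ^ 2)
        - ∑ t ∈ Finset.Icc 1 T, (f t u - f t (w t) - ⟪gradient (f t) (w t), u - w t⟫)) :
    ∑ t ∈ Finset.Icc 1 T, (f t (w t) - f t u) ≤
      A + 4 * L * B ^ 2 + 2 * B * Real.sqrt (G ^ 2 + ∑ t ∈ Finset.Icc 2 T,
        ‖gradient (f t) u - gradient (f (t - 1)) u‖ ^ 2) := by
  classical
  rcases Nat.eq_zero_or_pos T with hT | hT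
  · subst hT
    rw [show Finset.Icc 1 0 = (∅ : Finset ℕ) from Finset.Icc_eq_empty (by omega)]
    simp only [Finset.sum_empty]
    positivity
  set Dt : ℕ → ℝ := fun t => f t u - f t (w t) - ⟪gradient (f t) (w t), u - w t⟫ with hDt
  set DS := ∑ t ∈ Finset.Icc 1 T, (f t u - f t (w t) - ⟪gradient (f t) (w t), u - w t⟫)
    with hDSdef
  have hDSalt : DS = ∑ t ∈ Finset.Icc 1 T, Dt t := rfl
  set V := ∑ t ∈ Finset.Icc 2 T, ‖gradient (f t) u - gradient (f (t - 1)) u‖ ^ 2 with hVdef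
  set S := ∑ t ∈ Finset.Icc 1 T,
      ‖gradient (f t) (w t) - gradient (f (t - 1)) (w (t - 1))‖ ^ 2 with hSdef
  have hDnn : ∀ t ∈ Finset.Icc 1 T, 0 ≤ Dt t := by
    intro t ht
    have := convex_grad_ineq (f t) (hconv t ht) (hdiff t ht) (w t) u
    simp only [hDt]
    linarith
  have hDSnn : 0 ≤ DS := by rw [hDSalt]; exact Finset.sum_nonneg hDnn
  have hcoco : ∀ t ∈ Finset.Icc 1 T,
      ‖gradient (f t) u - gradient (f t) (w t)‖ ^ 2 ≤ 2 * L * Dt t := by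
    intro t ht
    exact coco_s11 hL (f t) (hconv t ht) (hdiff t ht) (hsmooth t ht) u (w t)
  have hVnn : 0 ≤ V := Finset.sum_nonneg fun _ _ => sq_nonneg _
  have hSnn : 0 ≤ S := Finset.sum_nonneg fun _ _ => sq_nonneg _
  have h1mem : (1 : ℕ) ∈ Finset.Icc 1 T := by simp [Finset.mem_Icc]; omega
  have hsplit : Finset.Icc 1 T = insert 1 (Finset.Icc 2 T) := by
    ext x; simp [Finset.mem_Icc, Finset.mem_insert]; omega
  have h1notin : (1 : ℕ) ∉ Finset.Icc 2 T := by simp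
  have hg0 : gradient (f 0) (w 0) = 0 := by rw [hf0]; exact gradient_const _ _
  -- term t = 1
  have hterm1 : ‖gradient (f 1) (w 1) - gradient (f (1 - 1)) (w (1 - 1))‖ ^ 2 ≤
      4 * L * Dt 1 + 2 * G ^ 2 := by
    have h11 : (1 : ℕ) - 1 = 0 := rfl
    rw [h11, hg0, sub_zero]
    have ha : gradient (f 1) (w 1) =
        (gradient (f 1) (w 1) - gradient (f 1) u) + gradient (f 1) u := by abel
    have h2 := sq2 (gradient (f 1) (w 1) - gradient (f 1) u) (gradient (f 1) u)
    rw [← ha] at h2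
    have hc1 : ‖gradient (f 1) (w 1) - gradient (f 1) u‖ ^ 2 ≤ 2 * L * Dt 1 := by
      rw [norm_sub_rev]; exact hcoco 1 h1mem
    have hgb : ‖gradient (f 1) u‖ ≤ G := hgrad 1 h1mem u
    nlinarith [norm_nonneg (gradient (f 1) u)]
  -- terms t ≥ 2
  have htermt : ∀ t ∈ Finset.Icc 2 T,
      ‖gradient (f t) (w t) - gradient (f (t - 1)) (w (t - 1))‖ ^ 2 ≤
      6 * L * Dt t + 3 * ‖gradient (f t) u - gradient (f (t - 1)) u‖ ^ 2
        + 6 * L * Dt (t - 1) := by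
    intro t ht
    simp only [Finset.mem_Icc] at ht
    have htm : t - 1 ∈ Finset.Icc 1 T := by simp [Finset.mem_Icc]; omega
    have htT : t ∈ Finset.Icc 1 T := by simp [Finset.mem_Icc]; omega
    have hdecomp : gradient (f t) (w t) - gradient (f (t - 1)) (w (t - 1)) =
        (gradient (f t) (w t) - gradient (f t) u)
        + (gradient (f t) u - gradient (f (t - 1)) u)
        + (gradient (f (t - 1)) u - gradient (f (t - 1)) (w (t - 1))) := by abel
    have h3 := sq3 (gradient (f t) (w t) - gradient (f t) u)
      (gradient (f t) u - gradient (f (t - 1)) u)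
      (gradient (f (t - 1)) u - gradient (f (t - 1)) (w (t - 1)))
    rw [← hdecomp] at h3
    have hca : ‖gradient (f t) (w t) - gradient (f t) u‖ ^ 2 ≤ 2 * L * Dt t := by
      rw [norm_sub_rev]; exact hcoco t htT
    have hcc : ‖gradient (f (t - 1)) u - gradient (f (t - 1)) (w (t - 1))‖ ^ 2 ≤
        2 * L * Dt (t - 1) := hcoco (t - 1) htm
    linarith
  have hsum2 : ∑ t ∈ Finset.Icc 2 T,
      ‖gradient (f t) (w t) - gradient (f (t - 1)) (w (t - 1))‖ ^ 2 ≤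
      6 * L * (∑ t ∈ Finset.Icc 2 T, Dt t) + 3 * V
        + 6 * L * (∑ t ∈ Finset.Icc 2 T, Dt (t - 1)) := by
    calc ∑ t ∈ Finset.Icc 2 T, ‖gradient (f t) (w t) - gradient (f (t - 1)) (w (t - 1))‖ ^ 2
        ≤ ∑ t ∈ Finset.Icc 2 T, (6 * L * Dt t
            + 3 * ‖gradient (f t) u - gradient (f (t - 1)) u‖ ^ 2 + 6 * L * Dt (t - 1)) :=
          Finset.sum_le_sum htermt
      _ = 6 * L * (∑ t ∈ Finset.Icc 2 T, Dt t) + 3 * V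
            + 6 * L * (∑ t ∈ Finset.Icc 2 T, Dt (t - 1)) := by
          rw [hVdef, Finset.sum_add_distrib, Finset.sum_add_distrib, Finset.mul_sum,
            Finset.mul_sum, Finset.mul_sum]
  have hsub1 : ∑ t ∈ Finset.Icc 2 T, Dt t ≤ DS := by
    rw [hDSalt]
    apply Finset.sum_le_sum_of_subset_of_nonneg
    · intro x hx; simp only [Finset.mem_Icc] at *; omega
    · intro t ht _; exact hDnn t ht
  have hsub2 : ∑ t ∈ Finset.Icc 2 T, Dt (t - 1) ≤ DS := by
    have hmap : Finset.Icc 2 T = (Finset.Icc 1 (T - 1)).map (addRightEmbedding 1) := by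
      rw [Finset.map_add_right_Icc]
      congr 1
      omega
    have heq : ∑ t ∈ Finset.Icc 2 T, Dt (t - 1) = ∑ t ∈ Finset.Icc 1 (T - 1), Dt t := by
      rw [hmap, Finset.sum_map]
      apply Finset.sum_congr rfl
      intro x hx
      simp [addRightEmbedding]
    rw [heq, hDSalt]
    apply Finset.sum_le_sum_of_subset_of_nonneg
    · intro x hx; simp only [Finset.mem_Icc] at *; omega
    · intro t ht _; exact hDnn t ht
  have hD1le : Dt 1 ≤ DS := by
    rw [hDSalt]; exact Finset.single_le_sum hDnn h1mem
  have hSle : S ≤ 4 * (G ^ 2 + V) + 16 * L * DS := by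
    rw [hSdef, hsplit, Finset.sum_insert h1notin]
    have hs1 := mul_le_mul_of_nonneg_left hsub1 (by positivity : (0:ℝ) ≤ 6 * L)
    have hs2 := mul_le_mul_of_nonneg_left hsub2 (by positivity : (0:ℝ) ≤ 6 * L)
    have hd1 := mul_le_mul_of_nonneg_left hD1le (by positivity : (0:ℝ) ≤ 4 * L)
    nlinarith [sq_nonneg G]
  -- sqrt manipulations
  have h4 : Real.sqrt (4 * (G ^ 2 + V)) = 2 * Real.sqrt (G ^ 2 + V) := by
    rw [show (4 : ℝ) = 2 ^ 2 by norm_num, Real.sqrt_mul (by positivity),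
      Real.sqrt_sq (by norm_num : (0:ℝ) ≤ 2)]
  have h16 : Real.sqrt (16 * L * DS) = 4 * Real.sqrt (L * DS) := by
    rw [show (16 : ℝ) * L * DS = 4 ^ 2 * (L * DS) by ring, Real.sqrt_mul (by positivity),
      Real.sqrt_sq (by norm_num : (0:ℝ) ≤ 4)]
  have hsqrtS : Real.sqrt S ≤ 2 * Real.sqrt (G ^ 2 + V) + 4 * Real.sqrt (L * DS) := by
    calc Real.sqrt S ≤ Real.sqrt (4 * (G ^ 2 + V) + 16 * L * DS) := Real.sqrt_le_sqrt hSle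
      _ ≤ Real.sqrt (4 * (G ^ 2 + V)) + Real.sqrt (16 * L * DS) :=
          sqrt_add_le' (by positivity) (by positivity)
      _ = 2 * Real.sqrt (G ^ 2 + V) + 4 * Real.sqrt (L * DS) := by rw [h4, h16]
  have hAMGM : 4 * B * Real.sqrt (L * DS) ≤ 4 * L * B ^ 2 + DS := by
    rw [Real.sqrt_mul hL.le DS]
    nlinarith [Real.sq_sqrt hL.le, Real.sq_sqrt hDSnn,
      sq_nonneg (2 * B * Real.sqrt L - Real.sqrt DS), Real.sqrt_nonneg L, Real.sqrt_nonneg DS]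
  have hBS : B * Real.sqrt S ≤ 2 * B * Real.sqrt (G ^ 2 + V) + 4 * L * B ^ 2 + DS := by
    have h1 := mul_le_mul_of_nonneg_left hsqrtS hB
    have h2 : B * (2 * Real.sqrt (G ^ 2 + V) + 4 * Real.sqrt (L * DS)) =
        2 * B * Real.sqrt (G ^ 2 + V) + 4 * B * Real.sqrt (L * DS) := by ring
    linarith
  calc ∑ t ∈ Finset.Icc 1 T, (f t (w t) - f t u) ≤ A + B * Real.sqrt S - DS := hreg
    _ ≤ A + (2 * B * Real.sqrt (G ^ 2 + V) + 4 * L * B ^ 2 + DS) - DS := by linarith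
    _ = A + 4 * L * B ^ 2 + 2 * B * Real.sqrt (G ^ 2 + V) := by ring
end

section
/- Let W ⊆ ℝᵈ be a nonempty closed convex set of diameter at most D, and consider one-step optimistic projected gradient descent: w_{t+1} = Π_W[w_t − η_{t+1}(g_t − h_t + h_{t+1})] with non-increasing step sizes η_t > 0 and h₁ = 0. Then for any comparator sequence u₁, …, u_T in W: ∑_{t=1}^T ⟨g_t, w_t − u_t⟩ ≤ (5D² + 12D·P_T)/(8η_{T+1}) + ∑_{t=1}^T 2η_{t+1}‖g_t − h_t‖² − ∑_{t=1}^{T−1} (1/(4η_{t+1}))‖w_t − w_{t+1}‖², where P_T = ∑_{t=2}^T ‖u_t − u_{t−1}‖. -/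
set_option maxHeartbeats 1000000


open Finset RealInnerProductSpace

lemma young_ip {E : Type*} [NormedAddCommGroup E] [InnerProductSpace ℝ E]
    (x y : E) {c : ℝ} (hc : 0 < c) : ⟪x, y⟫ ≤ c * ‖x‖^2 + ‖y‖^2 / (4*c) := by
  have h := real_inner_le_norm x y
  have h4c : (0:ℝ) < 4*c := by linarith
  rw [← sub_le_iff_le_add', le_div_iff₀ h4c]
  nlinarith [sq_nonneg (2*c*‖x‖ - ‖y‖), norm_nonneg x, norm_nonneg y]

lemma two_inner_eq {E : Type*} [NormedAddCommGroup E] [InnerProductSpace ℝ E]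
    (a b c : E) : 2 * ⟪a - b, b - c⟫ = ‖a - c‖^2 - ‖a - b‖^2 - ‖b - c‖^2 := by
  have h := norm_add_sq_real (a - b) (b - c)
  have h2 : a - b + (b - c) = a - c := by abel
  rw [h2] at h; linarith

lemma proj_vi {E : Type*} [NormedAddCommGroup E] [InnerProductSpace ℝ E]
    {K : Set E} (hK : Convex ℝ K) {p z : E} (hz : z ∈ K)
    (hmin : ∀ v ∈ K, ‖z - p‖ ≤ ‖v - p‖) {v : E} (hv : v ∈ K) :
    ⟪p - z, v - z⟫ ≤ 0 := by
  by_contra hq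
  push_neg at hq
  set q : ℝ := ⟪p - z, v - z⟫ with hqdef
  set n : ℝ := ‖v - z‖^2 with hndef
  have hn0 : 0 ≤ n := sq_nonneg _
  have key : ∀ θ : ℝ, 0 ≤ θ → θ ≤ 1 → 0 ≤ -2*θ*q + θ^2*n := by
    intro θ hθ0 hθ1
    have hmem : z + θ • (v - z) ∈ K := by
      have := hK hz hv (by linarith : (0:ℝ) ≤ 1 - θ) hθ0 (by ring)
      convert this using 1
      module
    have hle := hmin _ hmem
    have hsq : ‖z - p‖^2 ≤ ‖z + θ • (v - z) - p‖^2 := by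
      have := norm_nonneg (z - p)
      nlinarith [hle]
    have hexp : ‖z + θ • (v - z) - p‖^2 = ‖z - p‖^2 + 2*θ*(-q) + θ^2*n := by
      have h1 : z + θ • (v - z) - p = (z - p) + θ • (v - z) := by abel
      rw [h1, norm_add_sq_real, real_inner_smul_right, norm_smul]
      have : ⟪z - p, v - z⟫ = -q := by
        rw [hqdef, ← inner_neg_left]; congr 1; abel
      rw [this, Real.norm_eq_abs, abs_of_nonneg hθ0]
      ring
    rw [hexp] at hsq
    nlinarith
  rcases le_or_gt q n with hqn | hnq
  · have hn : 0 < n := lt_of_lt_of_le hq hqn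
    have := key (q/n) (by positivity) (by rw [div_le_one hn]; exact hqn)
    have h2 : -2*(q/n)*q + (q/n)^2*n = -q^2/n := by field_simp; ring
    rw [h2] at this
    rw [neg_div] at this
    have hpos : 0 < q^2/n := div_pos (by positivity) hn
    linarith
  · have := key 1 zero_le_one le_rfl
    nlinarith

/-- Dynamic regret of one-step optimistic projected OGD (Lemma `one-step-oogd`):
for a nonempty closed convex set `W` of diameter at most `D`, non-increasing step
sizes `η_t > 0`, hints with `h₁ = 0`, iterates `w_{t+1} = Π_W[w_t − η_{t+1}(g_t − h_t + h_{t+1})]`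
and comparators `u_t ∈ W`,
`∑_{t=1}^T ⟨g_t, w_t − u_t⟩ ≤ (5D² + 12D P_T)/(8η_{T+1})
  + ∑_{t=1}^T 2η_{t+1}‖g_t − h_t‖² − ∑_{t=1}^{T−1} (1/(4η_{t+1}))‖w_t − w_{t+1}‖²`,
where `P_T = ∑_{t=2}^T ‖u_t − u_{t−1}‖`. -/
theorem stmt_15 {d : ℕ} (T : ℕ) (W : Set (EuclideanSpace ℝ (Fin d)))
    (hWne : W.Nonempty) (hWclosed : IsClosed W) (hWconv : Convex ℝ W)
    (D : ℝ) (hD : ∀ x ∈ W, ∀ y ∈ W, ‖x - y‖ ≤ D)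
    (η : ℕ → ℝ) (hηpos : ∀ t, 0 < η t) (hηmono : ∀ t, η (t + 1) ≤ η t)
    (g h w u : ℕ → EuclideanSpace ℝ (Fin d))
    (hh1 : h 1 = 0)
    (hw1 : w 1 ∈ W)
    (hu : ∀ t ∈ Finset.Icc 1 T, u t ∈ W)
    (hproj : ∀ t ∈ Finset.Icc 1 T, w (t + 1) ∈ W ∧
      ∀ v ∈ W, ‖w (t + 1) - (w t - η (t + 1) • (g t - h t + h (t + 1)))‖ ≤
        ‖v - (w t - η (t + 1) • (g t - h t + h (t + 1)))‖) :
    ∑ t ∈ Finset.Icc 1 T, ⟪g t, w t - u t⟫ ≤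
      (5 * D ^ 2 + 12 * D * ∑ t ∈ Finset.Icc 2 T, ‖u t - u (t - 1)‖) / (8 * η (T + 1))
      + ∑ t ∈ Finset.Icc 1 T, 2 * η (t + 1) * ‖g t - h t‖ ^ 2
      - ∑ t ∈ Finset.Icc 1 (T - 1), (1 / (4 * η (t + 1))) * ‖w t - w (t + 1)‖ ^ 2 := by
  obtain ⟨x0, hx0⟩ := hWne
  have hD0 : 0 ≤ D := by
    have := hD x0 hx0 x0 hx0
    simpa using this
  rcases Nat.eq_zero_or_pos T with hT0 | hT1
  · subst hT0
    rw [show Finset.Icc 1 0 = ∅ from Finset.Icc_eq_empty (by omega),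
        show Finset.Icc 2 0 = ∅ from Finset.Icc_eq_empty (by omega)]
    simp only [Finset.sum_empty]
    have h1 := hηpos (0+1)
    have hnum : (0:ℝ) ≤ 5*D^2 + 12*D*0 := by positivity
    have := div_nonneg hnum (by linarith : (0:ℝ) ≤ 8*η (0+1))
    linarith
  -- the set W has nonnegative "squared slack" everywhere
  have key : ∀ S, 1 ≤ S → S ≤ T →
      ∑ t ∈ Finset.Icc 1 S, ⟪g t, w t - u t⟫ ≤
        ⟪g S - h S, w S - u S⟫ + (D^2 - ‖w S - u S‖^2)/(2*η (S+1))
        + 3*D/(2*η (S+1)) * ∑ t ∈ Finset.Icc 2 S, ‖u t - u (t-1)‖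
        + ∑ t ∈ Finset.Icc 1 (S-1), 2*η (t+1)*‖g t - h t‖^2
        - ∑ t ∈ Finset.Icc 1 (S-1), (1/(4*η (t+1)))*‖w t - w (t+1)‖^2 := by
    intro S hS1
    induction S, hS1 using Nat.le_induction with
    | base =>
      intro h1T
      have hu1 : u 1 ∈ W := hu 1 (Finset.mem_Icc.mpr ⟨le_refl 1, h1T⟩)
      have hwu : ‖w 1 - u 1‖ ≤ D := hD _ hw1 _ hu1
      have he2 := hηpos (1+1)
      rw [show Finset.Icc 2 1 = ∅ from Finset.Icc_eq_empty (by omega),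
          show (1:ℕ) - 1 = 0 from rfl,
          show Finset.Icc 1 0 = ∅ from Finset.Icc_eq_empty (by omega),
          Finset.Icc_self, Finset.sum_singleton]
      simp only [Finset.sum_empty]
      rw [hh1]
      simp only [sub_zero]
      have hnn : 0 ≤ D^2 - ‖w 1 - u 1‖^2 := by nlinarith [norm_nonneg (w 1 - u 1)]
      have := div_nonneg hnn (by linarith : (0:ℝ) ≤ 2*η (1+1))
      linarith
    | succ S hS ih =>
      intro hST
      have hSTle : S ≤ T := by omega
      have ihS := ih hSTle
      have he1 := hηpos (S+1)
      have he2 := hηpos (S+1+1)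
      have hemono := hηmono (S+1)
      have huS : u S ∈ W := hu S (Finset.mem_Icc.mpr ⟨hS, hSTle⟩)
      have huS1 : u (S+1) ∈ W := hu (S+1) (Finset.mem_Icc.mpr ⟨by omega, hST⟩)
      have hprojS := hproj S (Finset.mem_Icc.mpr ⟨hS, hSTle⟩)
      have hwS1 : w (S+1) ∈ W := hprojS.1
      have hwSW : w S ∈ W := by
        rcases eq_or_lt_of_le hS with hc | hc
        · rw [← hc]; exact hw1
        · have hm : S - 1 ∈ Finset.Icc 1 T := Finset.mem_Icc.mpr ⟨by omega, by omega⟩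
          have := (hproj _ hm).1
          rwa [show S - 1 + 1 = S from by omega] at this
      -- variational inequality for the projection step
      have hvi := proj_vi hWconv hwS1 hprojS.2 huS1
      have hvi' : ⟪w S - w (S+1), u (S+1) - w (S+1)⟫
          - η (S+1) * ⟪g S - h S + h (S+1), u (S+1) - w (S+1)⟫ ≤ 0 := by
        have hrw : w S - η (S+1) • (g S - h S + h (S+1)) - w (S+1)
            = (w S - w (S+1)) - η (S+1) • (g S - h S + h (S+1)) := by abel
        rw [hrw, inner_sub_left, real_inner_smul_left] at hvi
        exact hvi
      have hid := two_inner_eq (w S) (w (S+1)) (u (S+1))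
      have hflip1 : ⟪g S - h S + h (S+1), w (S+1) - u (S+1)⟫
          = -⟪g S - h S + h (S+1), u (S+1) - w (S+1)⟫ := by
        rw [← inner_neg_right]; congr 1; abel
      have hflip2 : ⟪w S - w (S+1), w (S+1) - u (S+1)⟫
          = -⟪w S - w (S+1), u (S+1) - w (S+1)⟫ := by
        rw [← inner_neg_right]; congr 1; abel
      have hF1 : ⟪g S - h S + h (S+1), w (S+1) - u (S+1)⟫ ≤
          (‖w S - u (S+1)‖^2 - ‖w S - w (S+1)‖^2 - ‖w (S+1) - u (S+1)‖^2) / (2*η (S+1)) := by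
        rw [hflip1, le_div_iff₀ (by linarith : (0:ℝ) < 2*η (S+1))]
        linarith [hvi', hid, hflip2]
      have hF2 : ⟪g (S+1), w (S+1) - u (S+1)⟫
          = ⟪g (S+1) - h (S+1), w (S+1) - u (S+1)⟫
            + ⟪g S - h S + h (S+1), w (S+1) - u (S+1)⟫
            - ⟪g S - h S, w (S+1) - u (S+1)⟫ := by
        simp only [inner_sub_left, inner_add_left]; ring
      have hF3 : ⟪g S - h S, w S - u S⟫ - ⟪g S - h S, w (S+1) - u (S+1)⟫
          = ⟪g S - h S, w S - w (S+1)⟫ + ⟪g S - h S, u (S+1) - u S⟫ := by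
        simp only [inner_sub_right]; ring
      have hF3a := young_ip (g S - h S) (w S - w (S+1)) he1
      have hF3b := young_ip (g S - h S) (u (S+1) - u S) he1
      have hΔD : ‖u (S+1) - u S‖ ≤ D := hD _ huS1 _ huS
      have hΔ0 : (0:ℝ) ≤ ‖u (S+1) - u S‖ := norm_nonneg _
      have hΔ2 : ‖u (S+1) - u S‖^2/(4*η (S+1)) ≤ D*‖u (S+1) - u S‖/(4*η (S+1)) := by
        have hnum : ‖u (S+1) - u S‖^2 ≤ D*‖u (S+1) - u S‖ := by nlinarith
        rw [div_eq_mul_inv, div_eq_mul_inv]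
        exact mul_le_mul_of_nonneg_right hnum (by positivity)
      have hF4 : ‖w S - u (S+1)‖^2 ≤ ‖w S - u S‖^2 + 2*D*‖u (S+1) - u S‖ := by
        have h1 : ‖w S - u (S+1)‖ ≤ D := hD _ hwSW _ huS1
        have h2 : ‖w S - u S‖ ≤ D := hD _ hwSW _ huS
        have h3 : ‖w S - u (S+1)‖ - ‖w S - u S‖ ≤ ‖u (S+1) - u S‖ := by
          have hh := norm_sub_norm_le (w S - u (S+1)) (w S - u S)
          have he : (w S - u (S+1)) - (w S - u S) = -(u (S+1) - u S) := by abel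
          rw [he, norm_neg] at hh; exact hh
        nlinarith [mul_le_mul_of_nonneg_right h3
            (add_nonneg (norm_nonneg (w S - u (S+1))) (norm_nonneg (w S - u S))),
          mul_le_mul_of_nonneg_left (add_le_add h1 h2) hΔ0]
      have haSD : ‖w (S+1) - u (S+1)‖ ≤ D := hD _ hwS1 _ huS1
      have hp0 : (0:ℝ) ≤ ∑ t ∈ Finset.Icc 2 S, ‖u t - u (t-1)‖ :=
        Finset.sum_nonneg fun t _ => norm_nonneg _
      -- the fraction comparison
      have hfrac : (D^2 - ‖w S - u S‖^2)/(2*η (S+1))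
          + (‖w S - u (S+1)‖^2 - ‖w S - w (S+1)‖^2 - ‖w (S+1) - u (S+1)‖^2)/(2*η (S+1))
          + ‖w S - w (S+1)‖^2/(4*η (S+1))
          + D*‖u (S+1) - u S‖/(4*η (S+1))
          + 3*D/(2*η (S+1)) * (∑ t ∈ Finset.Icc 2 S, ‖u t - u (t-1)‖)
          ≤ (D^2 - ‖w (S+1) - u (S+1)‖^2)/(2*η (S+1+1))
            + 3*D/(2*η (S+1+1)) * ((∑ t ∈ Finset.Icc 2 S, ‖u t - u (t-1)‖) + ‖u (S+1) - u S‖)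
            - ‖w S - w (S+1)‖^2/(4*η (S+1)) := by
        have hNnn : (0:ℝ) ≤ 2*(D^2 - ‖w (S+1) - u (S+1)‖^2)
            + 6*D*((∑ t ∈ Finset.Icc 2 S, ‖u t - u (t-1)‖) + ‖u (S+1) - u S‖) := by
          nlinarith [norm_nonneg (w (S+1) - u (S+1)), mul_nonneg hD0 (add_nonneg hp0 hΔ0)]
        have h1 : (D^2 - ‖w S - u S‖^2)/(2*η (S+1))
            + (‖w S - u (S+1)‖^2 - ‖w S - w (S+1)‖^2 - ‖w (S+1) - u (S+1)‖^2)/(2*η (S+1))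
            + ‖w S - w (S+1)‖^2/(4*η (S+1))
            + D*‖u (S+1) - u S‖/(4*η (S+1))
            + 3*D/(2*η (S+1)) * (∑ t ∈ Finset.Icc 2 S, ‖u t - u (t-1)‖)
            + ‖w S - w (S+1)‖^2/(4*η (S+1))
            = (2*(D^2 - ‖w S - u S‖^2) + 2*‖w S - u (S+1)‖^2 - 2*‖w (S+1) - u (S+1)‖^2
               + D*‖u (S+1) - u S‖
               + 6*D*(∑ t ∈ Finset.Icc 2 S, ‖u t - u (t-1)‖))/(4*η (S+1)) := by
          ring
        have h2 : 2*(D^2 - ‖w S - u S‖^2) + 2*‖w S - u (S+1)‖^2 - 2*‖w (S+1) - u (S+1)‖^2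
               + D*‖u (S+1) - u S‖
               + 6*D*(∑ t ∈ Finset.Icc 2 S, ‖u t - u (t-1)‖)
            ≤ 2*(D^2 - ‖w (S+1) - u (S+1)‖^2)
            + 6*D*((∑ t ∈ Finset.Icc 2 S, ‖u t - u (t-1)‖) + ‖u (S+1) - u S‖) := by
          nlinarith [hF4, mul_nonneg hD0 hΔ0]
        have h3 : (2*(D^2 - ‖w S - u S‖^2) + 2*‖w S - u (S+1)‖^2 - 2*‖w (S+1) - u (S+1)‖^2
               + D*‖u (S+1) - u S‖
               + 6*D*(∑ t ∈ Finset.Icc 2 S, ‖u t - u (t-1)‖))/(4*η (S+1))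
            ≤ (2*(D^2 - ‖w (S+1) - u (S+1)‖^2)
               + 6*D*((∑ t ∈ Finset.Icc 2 S, ‖u t - u (t-1)‖) + ‖u (S+1) - u S‖))/(4*η (S+1)) := by
          rw [div_eq_mul_inv, div_eq_mul_inv]
          exact mul_le_mul_of_nonneg_right h2 (by positivity)
        have h4 : (2*(D^2 - ‖w (S+1) - u (S+1)‖^2)
               + 6*D*((∑ t ∈ Finset.Icc 2 S, ‖u t - u (t-1)‖) + ‖u (S+1) - u S‖))/(4*η (S+1))
            ≤ (2*(D^2 - ‖w (S+1) - u (S+1)‖^2)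
               + 6*D*((∑ t ∈ Finset.Icc 2 S, ‖u t - u (t-1)‖) + ‖u (S+1) - u S‖))/(4*η (S+1+1)) := by
          apply div_le_div_of_nonneg_left hNnn (by linarith) (by linarith)
        have h5 : (2*(D^2 - ‖w (S+1) - u (S+1)‖^2)
               + 6*D*((∑ t ∈ Finset.Icc 2 S, ‖u t - u (t-1)‖) + ‖u (S+1) - u S‖))/(4*η (S+1+1))
            = (D^2 - ‖w (S+1) - u (S+1)‖^2)/(2*η (S+1+1))
              + 3*D/(2*η (S+1+1)) * ((∑ t ∈ Finset.Icc 2 S, ‖u t - u (t-1)‖) + ‖u (S+1) - u S‖) := by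
          ring
        linarith
      -- split the sums in the goal
      have hsplitg : ∑ t ∈ Finset.Icc 1 (S+1), ⟪g t, w t - u t⟫
          = (∑ t ∈ Finset.Icc 1 S, ⟪g t, w t - u t⟫) + ⟪g (S+1), w (S+1) - u (S+1)⟫ :=
        Finset.sum_Icc_succ_top (by omega) _
      have hsplitp : ∑ t ∈ Finset.Icc 2 (S+1), ‖u t - u (t-1)‖
          = (∑ t ∈ Finset.Icc 2 S, ‖u t - u (t-1)‖) + ‖u (S+1) - u S‖ := by
        rw [Finset.sum_Icc_succ_top (by omega)]
        simp
      have hsplitδ : ∑ t ∈ Finset.Icc 1 (S+1-1), 2*η (t+1)*‖g t - h t‖^2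
          = (∑ t ∈ Finset.Icc 1 (S-1), 2*η (t+1)*‖g t - h t‖^2) + 2*η (S+1)*‖g S - h S‖^2 := by
        rw [show S+1-1 = S-1+1 from by omega, Finset.sum_Icc_succ_top (by omega),
            show S-1+1 = S from by omega]
      have hsplitw : ∑ t ∈ Finset.Icc 1 (S+1-1), (1/(4*η (t+1)))*‖w t - w (t+1)‖^2
          = (∑ t ∈ Finset.Icc 1 (S-1), (1/(4*η (t+1)))*‖w t - w (t+1)‖^2)
            + (1/(4*η (S+1)))*‖w S - w (S+1)‖^2 := by
        rw [show S+1-1 = S-1+1 from by omega, Finset.sum_Icc_succ_top (by omega),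
            show S-1+1 = S from by omega]
      rw [hsplitg, hsplitp, hsplitδ, hsplitw]
      have hc4 : (1/(4*η (S+1)))*‖w S - w (S+1)‖^2 = ‖w S - w (S+1)‖^2/(4*η (S+1)) := by ring
      rw [hc4]
      linarith [ihS, hF1, hF2, hF3, hF3a, hF3b, hΔ2, hfrac]
  -- conclude from the invariant at S = T
  have hQ := key T hT1 le_rfl
  have he := hηpos (T+1)
  have huT : u T ∈ W := hu T (Finset.mem_Icc.mpr ⟨hT1, le_rfl⟩)
  have hyoungT := young_ip (g T - h T) (w T - u T) (by linarith : (0:ℝ) < 2*η (T+1))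
  have hq8 : ‖w T - u T‖^2/(4*(2*η (T+1))) = ‖w T - u T‖^2/(8*η (T+1)) := by ring
  rw [hq8] at hyoungT
  have hsplitδ : ∑ t ∈ Finset.Icc 1 T, 2*η (t+1)*‖g t - h t‖^2
      = (∑ t ∈ Finset.Icc 1 (T-1), 2*η (t+1)*‖g t - h t‖^2) + 2*η (T+1)*‖g T - h T‖^2 := by
    conv_lhs => rw [show T = T-1+1 from by omega]
    rw [Finset.sum_Icc_succ_top (by omega), show T-1+1 = T from by omega]
  have hp0 : (0:ℝ) ≤ ∑ t ∈ Finset.Icc 2 T, ‖u t - u (t-1)‖ :=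
    Finset.sum_nonneg fun t _ => norm_nonneg _
  have hfin : (D^2 - ‖w T - u T‖^2)/(2*η (T+1))
      + 3*D/(2*η (T+1)) * (∑ t ∈ Finset.Icc 2 T, ‖u t - u (t-1)‖)
      + ‖w T - u T‖^2/(8*η (T+1))
      ≤ (5*D^2 + 12*D*(∑ t ∈ Finset.Icc 2 T, ‖u t - u (t-1)‖))/(8*η (T+1)) := by
    have h1 : (D^2 - ‖w T - u T‖^2)/(2*η (T+1))
        + 3*D/(2*η (T+1)) * (∑ t ∈ Finset.Icc 2 T, ‖u t - u (t-1)‖)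
        + ‖w T - u T‖^2/(8*η (T+1))
        = (4*(D^2 - ‖w T - u T‖^2) + 12*D*(∑ t ∈ Finset.Icc 2 T, ‖u t - u (t-1)‖)
           + ‖w T - u T‖^2)/(8*η (T+1)) := by ring
    have h2 : 4*(D^2 - ‖w T - u T‖^2) + 12*D*(∑ t ∈ Finset.Icc 2 T, ‖u t - u (t-1)‖)
           + ‖w T - u T‖^2 ≤ 5*D^2 + 12*D*(∑ t ∈ Finset.Icc 2 T, ‖u t - u (t-1)‖) := by
      nlinarith [sq_nonneg D, sq_nonneg ‖w T - u T‖]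
    rw [h1, div_eq_mul_inv, div_eq_mul_inv]
    exact mul_le_mul_of_nonneg_right h2 (by positivity)
  rw [hsplitδ]
  linarith [hQ, hyoungT, hfin]
end

section
/- Let g₁, …, g_T be reals and 0 < h₁ ≤ h₂ ≤ ⋯ ≤ h_T with |g_t| ≤ h_t for all t. Define V̄_t = 4h_t² + ∑_{i=1}^{t−1} g_i², B_t = 4 + ∑_{i=1}^{t−1} g_i²/h_i², and α_t = ε/(√(B_t)·log²(B_t)) for a fixed ε > 0. Then ∑_{t=1}^T α_t·g_t²/√(V̄_t) ≤ 4ε·h_T. -/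
open Finset


lemma log_four_gt : (4:ℝ)/3 < Real.log 4 := by
  have h2 : (0.6931471803:ℝ) < Real.log 2 := Real.log_two_gt_d9
  have : Real.log 4 = 2 * Real.log 2 := by
    rw [show (4:ℝ) = 2^2 by norm_num, Real.log_pow]; push_cast; ring
  linarith

lemma aux_recip (a b r : ℝ) (ha : 4/3 ≤ a) (hb : 4/3 ≤ b) (hr : 1 ≤ r)
    (hba : b ≤ a + 2*(r-1)) : 1/a - 1/b ≤ (9/8)*(r-1) := by
  have ha0 : 0 < a := by linarith
  have hb0 : 0 < b := by linarith
  have h1 : 1/a - 1/b = (b - a)/(a*b) := by field_simp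
  rw [h1]
  rw [div_le_iff₀ (by positivity)]
  nlinarith [mul_le_mul_of_nonneg_left hb (by linarith : (0:ℝ) ≤ a), sq_nonneg (r-1)]

lemma aux_scalar (C D : ℝ) (hC : 4 ≤ C) (hD0 : 0 ≤ D) (hD1 : D ≤ 1) :
    D / (C * (Real.log C)^2) ≤ (3/2) * (1/Real.log C - 1/Real.log (C+D)) := by
  set a := Real.log C with haa
  set b := Real.log (C+D) with hbb
  have hC0 : (0:ℝ) < C := by linarith
  have hCD0 : (0:ℝ) < C + D := by linarith
  have ha : 4/3 ≤ a := le_of_lt (lt_of_lt_of_le log_four_gt (Real.log_le_log (by norm_num) hC))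
  have hab : a ≤ b := Real.log_le_log hC0 (by linarith)
  have hconc : D ≤ (b - a) * (C + D) := by
    have h5 := Real.log_le_sub_one_of_pos (show 0 < C/(C+D) by positivity)
    rw [Real.log_div hC0.ne' hCD0.ne'] at h5
    have h2 : C/(C+D) - 1 = -D/(C+D) := by field_simp; ring
    rw [h2] at h5
    have h4 : -D/(C+D) * (C+D) = -D := div_mul_cancel₀ _ hCD0.ne'
    nlinarith [mul_le_mul_of_nonneg_right h5 hCD0.le]
  have hb65 : b ≤ (6/5) * a := by
    have h54 : (5:ℝ)*Real.log (5/4) ≤ a := by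
      have h6 : (5:ℝ)*Real.log (5/4) = Real.log ((5/4)^5) := by
        rw [Real.log_pow]; push_cast; ring
      rw [h6]
      calc Real.log ((5/4:ℝ)^5) ≤ Real.log 4 := Real.log_le_log (by norm_num) (by norm_num)
        _ ≤ a := Real.log_le_log (by norm_num) hC
    have hcd : C + D ≤ (5/4)*C := by linarith
    have h7 : b ≤ Real.log ((5/4)*C) := Real.log_le_log hCD0 hcd
    rw [Real.log_mul (by norm_num) hC0.ne'] at h7
    linarith
  have ha0 : 0 < a := by linarith
  have hb0 : 0 < b := by linarith
  have h1 : 1/a - 1/b = (b - a)/(a*b) := by field_simp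
  rw [h1, ← mul_div_assoc]
  rw [div_le_div_iff₀ (by positivity) (by positivity)]
  have h8 : D ≤ (b-a)*(5/4*C) := by nlinarith
  have h9 : D*b ≤ D*(6/5*a) := mul_le_mul_of_nonneg_left hb65 hD0
  nlinarith [mul_le_mul_of_nonneg_left h9 ha0.le,
    mul_le_mul_of_nonneg_right h8 (sq_nonneg a)]

lemma aux_abel (T : ℕ) (hT : 1 ≤ T) (f p : ℕ → ℝ) (M : ℝ)
    (hf : ∀ t, 1 ≤ t → t ≤ T → 0 ≤ f t)
    (hmono : ∀ t, 1 ≤ t → t < T → f t ≤ f (t+1))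
    (hp0 : ∀ t, 1 ≤ t → t ≤ T+1 → 0 ≤ p t)
    (hpM : ∀ t, 1 ≤ t → t ≤ T+1 → p t ≤ M) :
    ∑ t ∈ Icc 1 T, f t * (p t - p (t+1)) ≤ f T * (M - p (T+1)) := by
  induction T, hT using Nat.le_induction with
  | base =>
    simp only [Icc_self, sum_singleton]
    have h1 := hpM 1 le_rfl (by norm_num)
    have h2 := hp0 2 (by norm_num) (by norm_num)
    have h3 := hf 1 le_rfl le_rfl
    nlinarith
  | succ n hn ih =>
    rw [Finset.sum_Icc_succ_top (by omega)]
    have hfn : f n ≤ f (n+1) := hmono n hn (by omega)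
    have hih := ih (fun t h1 h2 => hf t h1 (by omega)) (fun t h1 h2 => hmono t h1 (by omega))
      (fun t h1 h2 => hp0 t h1 (by omega)) (fun t h1 h2 => hpM t h1 (by omega))
    have hM : p (n+1) ≤ M := hpM (n+1) (by omega) (by omega)
    have hp1 : 0 ≤ p (n+1) := hp0 (n+1) (by omega) (by omega)
    have hfn0 : 0 ≤ f n := hf n hn (by omega)
    nlinarith [mul_le_mul_of_nonneg_right hfn (by linarith : 0 ≤ M - p (n+1))]

lemma aux_tele (T : ℕ) (f : ℕ → ℝ) : ∑ t ∈ Icc 1 T, (f (t+1) - f t) = f (T+1) - f 1 := by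
  induction T with
  | zero => simp
  | succ n ih => rw [Finset.sum_Icc_succ_top (by omega), ih]; ring

set_option maxHeartbeats 1000000 in
/-- Tuning lemma (Lemma 21 of Cutkosky et al. 2024): for `|g_t| ≤ h_t` with
`0 < h₁ ≤ h₂ ≤ ⋯ ≤ h_T`, setting `V̄_t = 4h_t² + ∑_{i<t} g_i²`,
`B_t = 4 + ∑_{i<t} g_i²/h_i²` and `α_t = ε/(√B_t · log² B_t)`,
`∑_{t=1}^T α_t g_t² / √V̄_t ≤ 4ε h_T`. -/
theorem stmt_17 (T : ℕ) (hT : 1 ≤ T) (g h : ℕ → ℝ) (ε : ℝ) (hε : 0 < ε)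
    (hh1 : 0 < h 1)
    (hhmono : ∀ s ∈ Finset.Icc 1 T, ∀ t ∈ Finset.Icc 1 T, s ≤ t → h s ≤ h t)
    (hgh : ∀ t ∈ Finset.Icc 1 T, |g t| ≤ h t)
    (Vbar B α : ℕ → ℝ)
    (hVbar : ∀ t, Vbar t = 4 * (h t) ^ 2 + ∑ i ∈ Finset.Icc 1 (t - 1), (g i) ^ 2)
    (hB : ∀ t, B t = 4 + ∑ i ∈ Finset.Icc 1 (t - 1), (g i) ^ 2 / (h i) ^ 2)
    (hα : ∀ t, α t = ε / (Real.sqrt (B t) * (Real.log (B t)) ^ 2)) :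
    ∑ t ∈ Finset.Icc 1 T, α t * (g t) ^ 2 / Real.sqrt (Vbar t) ≤ 4 * ε * h T := by
  have hpos : ∀ t, 1 ≤ t → t ≤ T → 0 < h t := fun t h1 h2 =>
    lt_of_lt_of_le hh1 (hhmono 1 (mem_Icc.mpr ⟨le_rfl, hT⟩) t (mem_Icc.mpr ⟨h1, h2⟩) h1)
  set h' : ℕ → ℝ := fun t => if t ≤ T then h t else h T with hh'def
  have hh'eq : ∀ t, t ≤ T → h' t = h t := by intro t htle; simp [hh'def, htle]
  have hh'pos : ∀ t, 1 ≤ t → 0 < h' t := by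
    intro t h1
    by_cases hc : t ≤ T
    · rw [hh'eq t hc]; exact hpos t h1 hc
    · simp only [hh'def, if_neg hc]; exact hpos T hT le_rfl
  have hh'mono : ∀ t, 1 ≤ t → t ≤ T → h' t ≤ h' (t+1) := by
    intro t h1 h2
    rw [hh'eq t h2]
    by_cases hc : t + 1 ≤ T
    · rw [hh'eq _ hc]
      exact hhmono t (mem_Icc.mpr ⟨h1, h2⟩) (t+1) (mem_Icc.mpr ⟨by omega, hc⟩) (by omega)
    · simp only [hh'def, if_neg hc]
      exact hhmono t (mem_Icc.mpr ⟨h1, h2⟩) T (mem_Icc.mpr ⟨hT, le_rfl⟩) h2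
  set S : ℕ → ℝ := fun t => ∑ i ∈ Icc 1 (t-1), (g i)^2 with hSdef
  have hS0 : ∀ t, 0 ≤ S t := fun t => Finset.sum_nonneg (fun i _ => sq_nonneg _)
  set C : ℕ → ℝ := fun t => 4 + S t / (h' t)^2 with hCdef
  have hC4 : ∀ t, 1 ≤ t → 4 ≤ C t := by
    intro t h1
    have h2 := hh'pos t h1
    have h3 := hS0 t
    have : 0 ≤ S t / (h' t)^2 := by positivity
    simp only [hCdef]; linarith
  have hlogC : ∀ t, 1 ≤ t → 4/3 ≤ Real.log (C t) := fun t h1 =>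
    le_of_lt (lt_of_lt_of_le log_four_gt (Real.log_le_log (by norm_num) (hC4 t h1)))
  set ψ : ℕ → ℝ := fun t => 1 / Real.log (C t) with hψdef
  have hψ0 : ∀ t, 1 ≤ t → 0 ≤ ψ t := by
    intro t h1
    have := hlogC t h1
    simp only [hψdef]; positivity
  have hψM : ∀ t, 1 ≤ t → ψ t ≤ 3/4 := by
    intro t h1
    have h2 := hlogC t h1
    simp only [hψdef]
    rw [div_le_iff₀ (by linarith)]; linarith
  -- key per-term bound
  have key : ∀ t ∈ Icc 1 T, α t * (g t) ^ 2 / Real.sqrt (Vbar t)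
      ≤ ε * ((3/2) * (h' t * (ψ t - ψ (t+1))) + (27/16) * (h' (t+1) - h' t)) := by
    intro t hts
    obtain ⟨ht1, htT⟩ := mem_Icc.mp hts
    have hht : 0 < h t := hpos t ht1 htT
    have hh't : h' t = h t := hh'eq t htT
    have hgt2 : (g t)^2 ≤ (h t)^2 := by
      have h5 := hgh t hts
      have h6 := abs_nonneg (g t)
      nlinarith [sq_abs (g t)]
    set D : ℝ := (g t)^2 / (h t)^2 with hDdef
    have hD0 : 0 ≤ D := by positivity
    have hD1 : D ≤ 1 := by rw [hDdef, div_le_one (by positivity)]; exact hgt2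
    have hCt : 4 ≤ C t := hC4 t ht1
    have hCte : C t = 4 + S t / (h t)^2 := by rw [hCdef]; simp only; rw [hh't]
    have hBC : C t ≤ B t := by
      rw [hB t, hCte, hSdef]
      simp only
      rw [Finset.sum_div]
      apply add_le_add (le_refl _)
      apply Finset.sum_le_sum
      intro i hi
      obtain ⟨hi1, hi2⟩ := mem_Icc.mp hi
      have hhi : 0 < h i := hpos i hi1 (by omega)
      have hih : h i ≤ h t := hhmono i (mem_Icc.mpr ⟨hi1, by omega⟩) t (mem_Icc.mpr ⟨ht1, htT⟩) (by omega)
      have h7 : (h i)^2 ≤ (h t)^2 := by nlinarith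
      gcongr (g i)^2 / ?_
    have hB4 : 4 ≤ B t := le_trans hCt hBC
    have hlogCt : 4/3 ≤ Real.log (C t) := hlogC t ht1
    have hlogB : Real.log (C t) ≤ Real.log (B t) := Real.log_le_log (by linarith) hBC
    have hlogB0 : (0:ℝ) < Real.log (B t) := by linarith
    have hsqB : (0:ℝ) < Real.sqrt (B t) := Real.sqrt_pos.mpr (by linarith)
    have hsqC : (0:ℝ) < Real.sqrt (C t) := Real.sqrt_pos.mpr (by linarith)
    have hVeq : Vbar t = (h t)^2 * C t := by
      rw [hVbar t, hCte, hSdef]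
      simp only
      field_simp
    have hsV : Real.sqrt (Vbar t) = h t * Real.sqrt (C t) := by
      rw [hVeq, Real.sqrt_mul (sq_nonneg _), Real.sqrt_sq hht.le]
    have e1 : α t * (g t)^2 / Real.sqrt (Vbar t)
        = ε * (g t)^2 / (Real.sqrt (B t) * (Real.log (B t))^2 * (h t * Real.sqrt (C t))) := by
      rw [hα t, hsV, div_mul_eq_mul_div, div_div]
    have e2 : ε * (g t)^2 / (Real.sqrt (B t) * (Real.log (B t))^2 * (h t * Real.sqrt (C t)))
        ≤ ε * (g t)^2 / (Real.sqrt (C t) * (Real.log (C t))^2 * (h t * Real.sqrt (C t))) := by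
      have h7 : Real.sqrt (C t) * (Real.log (C t))^2 * (h t * Real.sqrt (C t))
          ≤ Real.sqrt (B t) * (Real.log (B t))^2 * (h t * Real.sqrt (C t)) := by
        have h8 : Real.sqrt (C t) ≤ Real.sqrt (B t) := Real.sqrt_le_sqrt hBC
        have h9 : (Real.log (C t))^2 ≤ (Real.log (B t))^2 := by nlinarith
        apply mul_le_mul_of_nonneg_right _ (by positivity)
        apply mul_le_mul h8 h9 (by positivity) (by positivity)
      apply div_le_div_of_nonneg_left (by positivity) _ h7
      have h10 : (0:ℝ) < Real.log (C t) := by linarith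
      positivity
    have e3 : Real.sqrt (C t) * (Real.log (C t))^2 * (h t * Real.sqrt (C t))
        = h t * (C t * (Real.log (C t))^2) := by
      have hms : Real.sqrt (C t) * Real.sqrt (C t) = C t := Real.mul_self_sqrt (by linarith)
      linear_combination ((Real.log (C t))^2 * h t) * hms
    have e4 : ε * (g t)^2 / (h t * (C t * (Real.log (C t))^2))
        = ε * (h t * (D / (C t * (Real.log (C t))^2))) := by
      rw [hDdef]
      field_simp
    have e5 : D / (C t * (Real.log (C t))^2)
        ≤ (3/2) * (1/Real.log (C t) - 1/Real.log (C t + D)) :=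
      aux_scalar (C t) D hCt hD0 hD1
    -- relating log (C t + D) with log (C (t+1))
    have hSt1 : S (t+1) = S t + (g t)^2 := by
      obtain ⟨u, rfl⟩ : ∃ u, t = u + 1 := ⟨t - 1, by omega⟩
      simp only [hSdef, Nat.add_sub_cancel]
      rw [Finset.sum_Icc_succ_top (by omega)]
    have hht1 : 0 < h' (t+1) := hh'pos (t+1) (by omega)
    have hrm : h t ≤ h' (t+1) := by rw [← hh't]; exact hh'mono t ht1 htT
    set r : ℝ := h' (t+1) / h t with hrdef
    have hr1 : 1 ≤ r := (one_le_div hht).mpr hrm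
    have hCt1e : C (t+1) = 4 + (S t + (g t)^2) / (h' (t+1))^2 := by
      rw [hCdef]; simp only; rw [hSt1]
    have hCt14 : 4 ≤ C (t+1) := hC4 (t+1) (by omega)
    have hCtil4 : 4 ≤ C t + D := by linarith
    have hlogCtil : 4/3 ≤ Real.log (C t + D) :=
      le_of_lt (lt_of_lt_of_le log_four_gt (Real.log_le_log (by norm_num) hCtil4))
    have hcomp : C t + D ≤ r^2 * C (t+1) := by
      have hexp : r^2 * C (t+1) = 4*r^2 + (S t + (g t)^2) / (h t)^2 := by
        rw [hCt1e, hrdef]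
        field_simp
      have hctile : C t + D = 4 + (S t + (g t)^2) / (h t)^2 := by
        rw [hCte, hDdef, add_assoc, ← add_div]
      rw [hexp, hctile]
      nlinarith
    have hlogcomp : Real.log (C t + D) ≤ Real.log (C (t+1)) + 2*(r - 1) := by
      have h8 : Real.log (C t + D) ≤ Real.log (r^2 * C (t+1)) :=
        Real.log_le_log (by linarith) hcomp
      have h9 : Real.log (r^2 * C (t+1)) = 2 * Real.log r + Real.log (C (t+1)) := by
        have hr0 : (0:ℝ) < r := div_pos hht1 hht
        rw [Real.log_mul (pow_ne_zero 2 hr0.ne') (by linarith : (0:ℝ) < C (t+1)).ne', Real.log_pow]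
        push_cast; ring
      have h10 : Real.log r ≤ r - 1 := Real.log_le_sub_one_of_pos (div_pos hht1 hht)
      linarith
    have e6 : 1/Real.log (C (t+1)) - 1/Real.log (C t + D) ≤ (9/8)*(r - 1) :=
      aux_recip _ _ _ (hlogC (t+1) (by omega)) hlogCtil hr1 hlogcomp
    -- assemble
    have hψt : ψ t = 1/Real.log (C t) := by rw [hψdef]
    have hψt1 : ψ (t+1) = 1/Real.log (C (t+1)) := by rw [hψdef]
    have hrh : h t * (r - 1) = h' (t+1) - h t := by rw [hrdef]; field_simp
    calc α t * (g t)^2 / Real.sqrt (Vbar t)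
        = ε * (g t)^2 / (Real.sqrt (B t) * (Real.log (B t))^2 * (h t * Real.sqrt (C t))) := e1
      _ ≤ ε * (g t)^2 / (Real.sqrt (C t) * (Real.log (C t))^2 * (h t * Real.sqrt (C t))) := e2
      _ = ε * (h t * (D / (C t * (Real.log (C t))^2))) := by rw [e3, e4]
      _ ≤ ε * (h t * ((3/2) * (1/Real.log (C t) - 1/Real.log (C t + D)))) := by
          apply mul_le_mul_of_nonneg_left _ hε.le
          exact mul_le_mul_of_nonneg_left e5 hht.le
      _ ≤ ε * ((3/2) * (h' t * (ψ t - ψ (t+1))) + (27/16) * (h' (t+1) - h' t)) := by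
          rw [hh't, hψt, hψt1]
          have h11 : 1/Real.log (C t) - 1/Real.log (C t + D)
              ≤ (1/Real.log (C t) - 1/Real.log (C (t+1))) + (9/8)*(r-1) := by linarith
          have h12 : h t * ((3/2) * (1/Real.log (C t) - 1/Real.log (C t + D)))
              ≤ (3/2) * (h t * (1/Real.log (C t) - 1/Real.log (C (t+1)))) + (27/16) * (h' (t+1) - h t) := by
            rw [← hrh]
            nlinarith [mul_le_mul_of_nonneg_left h11 hht.le]
          exact mul_le_mul_of_nonneg_left h12 hε.le
  -- sum up
  have habel : ∑ t ∈ Icc 1 T, h' t * (ψ t - ψ (t+1)) ≤ h' T * (3/4 - ψ (T+1)) :=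
    aux_abel T hT h' ψ (3/4) (fun t h1 h2 => (hh'pos t h1).le)
      (fun t h1 h2 => hh'mono t h1 (by omega))
      (fun t h1 h2 => hψ0 t h1) (fun t h1 h2 => hψM t h1)
  have htele : ∑ t ∈ Icc 1 T, (h' (t+1) - h' t) = h' (T+1) - h' 1 := aux_tele T h'
  have hψT1 : 0 ≤ ψ (T+1) := hψ0 (T+1) (by omega)
  have hh'T : h' T = h T := hh'eq T le_rfl
  have hh'T1 : h' (T+1) = h T := by simp only [hh'def, if_neg (by omega : ¬ T + 1 ≤ T)]
  have hh'1 : h' 1 = h 1 := hh'eq 1 hT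
  have hhT : 0 < h T := hpos T hT le_rfl
  calc ∑ t ∈ Finset.Icc 1 T, α t * (g t) ^ 2 / Real.sqrt (Vbar t)
      ≤ ∑ t ∈ Icc 1 T, ε * ((3/2) * (h' t * (ψ t - ψ (t+1))) + (27/16) * (h' (t+1) - h' t)) :=
        Finset.sum_le_sum key
    _ = ε * (3/2) * (∑ t ∈ Icc 1 T, h' t * (ψ t - ψ (t+1)))
        + ε * (27/16) * (∑ t ∈ Icc 1 T, (h' (t+1) - h' t)) := by
        rw [Finset.mul_sum, Finset.mul_sum, ← Finset.sum_add_distrib]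
        apply Finset.sum_congr rfl
        intros; ring
    _ ≤ ε * (3/2) * (h' T * (3/4 - ψ (T+1))) + ε * (27/16) * (h' (T+1) - h' 1) := by
        rw [htele]
        have := mul_le_mul_of_nonneg_left habel (by positivity : (0:ℝ) ≤ ε * (3/2))
        linarith
    _ ≤ 4 * ε * h T := by
        rw [hh'T, hh'T1, hh'1]
        nlinarith [mul_nonneg (mul_nonneg hε.le hhT.le) hψT1, mul_pos hε hhT, mul_pos hε hh1]
end
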